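/- arXiv:math/0010204 — 4 statements merged into one kernel-verified Lean document; each statement's English description precedes it below -/
import Mathlib

section
/- Let V₀ be a free ℤ[r]-module with basis {x_β : β ∈ Φ⁺}, and for each k define τ_k by τ_k(x_β) = 0 if (α_k,β) = 2, τ_k(x_β) = r·x_{β−α_k} if (α_k,β) = 1, τ_k(x_β) = x_β if (α_k,β) = 0, and τ_k(x_β) = (1−r²)x_β + r·x_{β+α_k} if (α_k,β) = −1. Then for nonadjacent k, l (i.e., (α_k,α_l) = 0), τ_k τ_l = τ_l τ_k. -/
/-- The fundamental root `α_i`, written in coordinates with respect to the basis of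
fundamental roots. -/
def esingle {n : ℕ} (i : Fin n) : Fin n → ℤ := Pi.single i 1

/-- A finite crystallographic simply-laced root system (type `A`, `D` or `E`),
given by the Gram matrix `C` of the fundamental roots `α_1, …, α_n` (all of squared
length 2):  `C i j = (α_i, α_j)`, which is `2` on the diagonal and `0` or `-1` off
the diagonal, and is positive definite.  Roots are coordinatized in the root
lattice `ℤⁿ`; the inner product is `ip`, and the positive roots are exactly the
lattice vectors of squared length `2` with nonnegative coordinates. -/
structure ADE (n : ℕ) where
  C : Matrix (Fin n) (Fin n) ℤ
  symm : ∀ i j, C i j = C j i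
  diag : ∀ i, C i i = 2
  offdiag : ∀ i j, i ≠ j → C i j = 0 ∨ C i j = -1
  posdef : ∀ v : Fin n → ℤ, v ≠ 0 → 0 < ∑ i, ∑ j, v i * C i j * v j

namespace ADE

variable {n : ℕ}

/-- The inner product `( , )` on the root lattice. -/
def ip (X : ADE n) (v w : Fin n → ℤ) : ℤ := ∑ i, ∑ j, v i * X.C i j * w j

/-- The set `Φ⁺` of positive roots: the lattice vectors of squared length `2`
all of whose coordinates (with respect to the fundamental roots) are nonnegative. -/
def Pos (X : ADE n) : Set (Fin n → ℤ) :=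
  {β | β ≠ 0 ∧ (∀ j, 0 ≤ β j) ∧ X.ip β β = 2}

/-- The height `ht(β)`: the sum of the coefficients of `β` with respect to the
fundamental roots. -/
def htZ (β : Fin n → ℤ) : ℤ := ∑ j, β j

end ADE

namespace ADE

variable {n : ℕ}

/-- The index type of the basis `{x_β : β ∈ Φ⁺}`. -/
abbrev PosIdx (X : ADE n) := {β : Fin n → ℤ // β ∈ X.Pos}

/-- The free module with basis `{x_β : β ∈ Φ⁺}` over a coefficient ring `A`. -/
abbrev LKMod (X : ADE n) (A : Type) [CommRing A] := ADE.PosIdx X →₀ A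

/-- The basis vector `x_β`. -/
noncomputable def xv (X : ADE n) (A : Type) [CommRing A] (b : ADE.PosIdx X) :
    ADE.LKMod X A := Finsupp.single b 1

open scoped Classical in
/-- The linear map `τ_k` over a coefficient ring `A` with distinguished element `r`:
`τ_k x_β = 0`, `r x_{β-α_k}`, `x_β`, or `(1 - r²) x_β + r x_{β+α_k}` according as
`(α_k, β) = 2, 1, 0, -1`. -/
noncomputable def tau (X : ADE n) (A : Type) [CommRing A] (r : A) (k : Fin n) :
    ADE.LKMod X A →ₗ[A] ADE.LKMod X A :=
  Finsupp.linearCombination A fun b : ADE.PosIdx X =>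
    if X.ip (esingle k) b.1 = 2 then 0
    else if X.ip (esingle k) b.1 = 1 then
      (if h : b.1 - esingle k ∈ X.Pos then r • Finsupp.single ⟨b.1 - esingle k, h⟩ 1 else 0)
    else if X.ip (esingle k) b.1 = 0 then Finsupp.single b 1
    else (1 - r ^ 2) • Finsupp.single b 1 +
      (if h : b.1 + esingle k ∈ X.Pos then r • Finsupp.single ⟨b.1 + esingle k, h⟩ 1 else 0)

end ADE
namespace ADE

variable {n : ℕ} (X : ADE n)

lemma ip_add_right (u v w : Fin n → ℤ) : X.ip u (v + w) = X.ip u v + X.ip u w := by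
  simp [ip, mul_add, Finset.sum_add_distrib]

lemma ip_sub_right (u v w : Fin n → ℤ) : X.ip u (v - w) = X.ip u v - X.ip u w := by
  simp [ip, mul_sub, Finset.sum_sub_distrib]

lemma ip_comm (u v : Fin n → ℤ) : X.ip u v = X.ip v u := by
  rw [ip, Finset.sum_comm]
  refine Finset.sum_congr rfl fun i _ => Finset.sum_congr rfl fun j _ => ?_
  rw [X.symm j i]; ring

lemma ip_add_left (u v w : Fin n → ℤ) : X.ip (u + v) w = X.ip u w + X.ip v w := by
  rw [ip_comm, ip_add_right, ip_comm X w u, ip_comm X w v]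

lemma ip_sub_left (u v w : Fin n → ℤ) : X.ip (u - v) w = X.ip u w - X.ip v w := by
  rw [ip_comm, ip_sub_right, ip_comm X w u, ip_comm X w v]

lemma ip_es (i j : Fin n) : X.ip (esingle i) (esingle j) = X.C i j := by
  simp [ip, esingle, Pi.single_apply]

lemma ip_zero : X.ip 0 0 = 0 := by simp [ip]

lemma ip_nonneg (v : Fin n → ℤ) : 0 ≤ X.ip v v := by
  by_cases hv : v = 0
  · subst hv; simp [ip]
  · exact (X.posdef v hv).le

lemma ip_pos_ne (v : Fin n → ℤ) (hv : X.ip v v ≠ 0) : v ≠ 0 := by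
  intro h; subst h; exact hv (X.ip_zero)

lemma ip_eq_zero (v : Fin n → ℤ) (hv : X.ip v v = 0) : v = 0 := by
  by_contra hne
  have := X.posdef v hne
  rw [show (∑ i, ∑ j, v i * X.C i j * v j) = X.ip v v from rfl, hv] at this
  exact lt_irrefl 0 this

lemma ip_norm_add (v w : Fin n → ℤ) :
    X.ip (v + w) (v + w) = X.ip v v + 2 * X.ip w v + X.ip w w := by
  rw [ip_add_left, ip_add_right, ip_add_right, ip_comm X v w]; ring

lemma ip_norm_sub (v w : Fin n → ℤ) :
    X.ip (v - w) (v - w) = X.ip v v - 2 * X.ip w v + X.ip w w := by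
  rw [ip_sub_left, ip_sub_right, ip_sub_right, ip_comm X v w]; ring

lemma score_range {β : Fin n → ℤ} (hβ : β ∈ X.Pos) (k : Fin n) :
    -1 ≤ X.ip (esingle k) β ∧ X.ip (esingle k) β ≤ 2 := by
  obtain ⟨hne, hnn, hnorm⟩ := hβ
  have h1 := X.ip_nonneg (β + esingle k)
  have h2 := X.ip_nonneg (β - esingle k)
  rw [ip_norm_add, hnorm, ip_es, X.diag] at h1
  rw [ip_norm_sub, hnorm, ip_es, X.diag] at h2
  constructor
  · rcases eq_or_lt_of_le h1 with he | _
    · exfalso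
      have hz : β + esingle k = 0 := by
        apply X.ip_eq_zero
        rw [ip_norm_add, hnorm, ip_es, X.diag]
        omega
      have := congrFun hz k
      have hk := hnn k
      simp [esingle, Pi.single_apply] at this
      omega
    · omega
  · omega

lemma eq_two {β : Fin n → ℤ} (hβ : β ∈ X.Pos) (k : Fin n)
    (h2 : X.ip (esingle k) β = 2) : β = esingle k := by
  obtain ⟨hne, hnn, hnorm⟩ := hβ
  have hz : β - esingle k = 0 := by
    apply X.ip_eq_zero
    rw [ip_norm_sub, hnorm, ip_es, X.diag, h2]; ring
  rwa [sub_eq_zero] at hz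

lemma add_mem {β : Fin n → ℤ} (hβ : β ∈ X.Pos) (k : Fin n)
    (hm : X.ip (esingle k) β = -1) : β + esingle k ∈ X.Pos := by
  obtain ⟨hne, hnn, hnorm⟩ := hβ
  have hnorm2 : X.ip (β + esingle k) (β + esingle k) = 2 := by
    rw [ip_norm_add, hnorm, ip_es, X.diag, hm]; ring
  refine ⟨X.ip_pos_ne _ (by rw [hnorm2]; norm_num), fun j => ?_, hnorm2⟩
  have := hnn j
  simp only [Pi.add_apply, esingle, Pi.single_apply]
  split <;> omega

lemma sub_mem_iff {β : Fin n → ℤ} (hβ : β ∈ X.Pos) (k : Fin n)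
    (h1 : X.ip (esingle k) β = 1) : (β - esingle k ∈ X.Pos) ↔ 1 ≤ β k := by
  obtain ⟨hne, hnn, hnorm⟩ := hβ
  have hnorm2 : X.ip (β - esingle k) (β - esingle k) = 2 := by
    rw [ip_norm_sub, hnorm, ip_es, X.diag, h1]; ring
  constructor
  · rintro ⟨-, hnn2, -⟩
    have := hnn2 k
    simp [esingle, Pi.single_apply] at this
    omega
  · intro hk
    refine ⟨X.ip_pos_ne _ (by rw [hnorm2]; norm_num), fun j => ?_, hnorm2⟩
    have := hnn j
    simp only [Pi.sub_apply, esingle, Pi.single_apply]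
    by_cases hj : j = k
    · subst hj; simp; omega
    · simp [hj]; omega

end ADE

namespace ADE

variable {n : ℕ} (X : ADE n) (A : Type) [CommRing A] (r : A) (k : Fin n)

lemma tau_single_two (b : PosIdx X) (h2 : X.ip (esingle k) b.1 = 2) :
    X.tau A r k (Finsupp.single b 1) = 0 := by
  classical
  simp only [tau, Finsupp.linearCombination_single, one_smul]
  rw [if_pos h2]

lemma tau_single_one (b : PosIdx X) (h1 : X.ip (esingle k) b.1 = 1) (hk : 1 ≤ b.1 k) :
    X.tau A r k (Finsupp.single b 1) =
      r • Finsupp.single ⟨b.1 - esingle k, (X.sub_mem_iff b.2 k h1).mpr hk⟩ 1 := by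
  classical
  simp only [tau, Finsupp.linearCombination_single, one_smul]
  rw [if_neg (by omega), if_pos h1, dif_pos ((X.sub_mem_iff b.2 k h1).mpr hk)]

lemma tau_single_one' (b : PosIdx X) (h1 : X.ip (esingle k) b.1 = 1) (hk : ¬ 1 ≤ b.1 k) :
    X.tau A r k (Finsupp.single b 1) = 0 := by
  classical
  simp only [tau, Finsupp.linearCombination_single, one_smul]
  rw [if_neg (by omega), if_pos h1, dif_neg (fun hc => hk ((X.sub_mem_iff b.2 k h1).mp hc))]

lemma tau_single_zero (b : PosIdx X) (h0 : X.ip (esingle k) b.1 = 0) :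
    X.tau A r k (Finsupp.single b 1) = Finsupp.single b 1 := by
  classical
  simp only [tau, Finsupp.linearCombination_single, one_smul]
  rw [if_neg (by omega), if_neg (by omega), if_pos h0]

lemma tau_single_neg (b : PosIdx X) (hm : X.ip (esingle k) b.1 = -1) :
    X.tau A r k (Finsupp.single b 1) =
      (1 - r ^ 2) • Finsupp.single b 1 +
        r • Finsupp.single ⟨b.1 + esingle k, X.add_mem b.2 k hm⟩ 1 := by
  classical
  simp only [tau, Finsupp.linearCombination_single, one_smul]
  rw [if_neg (by omega), if_neg (by omega), if_neg (by omega), dif_pos (X.add_mem b.2 k hm)]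

end ADE

namespace ADE

variable {n : ℕ}

lemma single_congr (X : ADE n) (A : Type) [CommRing A] {v w : Fin n → ℤ}
    (hv : v ∈ X.Pos) (hw : w ∈ X.Pos) (hvw : v = w) :
    (Finsupp.single ⟨v, hv⟩ 1 : LKMod X A) = Finsupp.single ⟨w, hw⟩ 1 := by
  subst hvw; rfl

lemma comm_aux (X : ADE n) (A : Type) [CommRing A] (r : A) (k l : Fin n)
    (h : X.ip (esingle k) (esingle l) = 0) (b : PosIdx X)
    (hle : X.ip (esingle k) b.1 ≤ X.ip (esingle l) b.1) :
    X.tau A r k (X.tau A r l (Finsupp.single b 1)) =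
      X.tau A r l (X.tau A r k (Finsupp.single b 1)) := by
  have hlk : X.ip (esingle l) (esingle k) = 0 := by rw [ip_comm]; exact h
  have hne : k ≠ l := by
    intro he; subst he; rw [ip_es, X.diag] at h; omega
  have sk : ∀ v, X.ip (esingle k) (v + esingle l) = X.ip (esingle k) v := fun v => by
    rw [ip_add_right, h, add_zero]
  have sk' : ∀ v, X.ip (esingle k) (v - esingle l) = X.ip (esingle k) v := fun v => by
    rw [ip_sub_right, h, sub_zero]
  have sl : ∀ v, X.ip (esingle l) (v + esingle k) = X.ip (esingle l) v := fun v => by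
    rw [ip_add_right, hlk, add_zero]
  have sl' : ∀ v, X.ip (esingle l) (v - esingle k) = X.ip (esingle l) v := fun v => by
    rw [ip_sub_right, hlk, sub_zero]
  have ck : ∀ v : Fin n → ℤ, (v + esingle l) k = v k := fun v => by
    simp [esingle, Pi.single_eq_of_ne hne]
  have ck' : ∀ v : Fin n → ℤ, (v - esingle l) k = v k := fun v => by
    simp [esingle, Pi.single_eq_of_ne hne]
  have cl : ∀ v : Fin n → ℤ, (v + esingle k) l = v l := fun v => by
    simp [esingle, Pi.single_eq_of_ne hne.symm]
  have cl' : ∀ v : Fin n → ℤ, (v - esingle k) l = v l := fun v => by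
    simp [esingle, Pi.single_eq_of_ne hne.symm]
  obtain ⟨ha1, ha2⟩ := X.score_range b.2 k
  obtain ⟨hc1, hc2⟩ := X.score_range b.2 l
  by_cases hc : X.ip (esingle l) b.1 = 2
  · have hb := X.eq_two b.2 l hc
    have ha : X.ip (esingle k) b.1 = 0 := by rw [hb]; exact h
    rw [X.tau_single_two A r l b hc, X.tau_single_zero A r k b ha, map_zero,
      X.tau_single_two A r l b hc]
  · have ha' : X.ip (esingle k) b.1 = -1 ∨ X.ip (esingle k) b.1 = 0 ∨
        X.ip (esingle k) b.1 = 1 := by omega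
    have hc' : X.ip (esingle l) b.1 = -1 ∨ X.ip (esingle l) b.1 = 0 ∨
        X.ip (esingle l) b.1 = 1 := by omega
    rcases ha' with ha | ha | ha <;> rcases hc' with hcc | hcc | hcc
    -- (-1,-1)
    · have Kbl := X.tau_single_neg A r k ⟨_, X.add_mem b.2 l hcc⟩
        (show X.ip (esingle k) (b.1 + esingle l) = -1 by rw [sk]; exact ha)
      have Lbk := X.tau_single_neg A r l ⟨_, X.add_mem b.2 k ha⟩
        (show X.ip (esingle l) (b.1 + esingle k) = -1 by rw [sl]; exact hcc)
      simp only [X.tau_single_neg A r l b hcc, X.tau_single_neg A r k b ha,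
        map_add, map_smul, Kbl, Lbk]
      rw [X.single_congr A _ _ (add_right_comm b.1 (esingle l) (esingle k))]
      module
      exact X.add_mem (X.add_mem b.2 k ha) l (by rw [sl]; exact hcc)
    -- (-1,0)
    · have Lbk := X.tau_single_zero A r l ⟨_, X.add_mem b.2 k ha⟩
        (show X.ip (esingle l) (b.1 + esingle k) = 0 by rw [sl]; exact hcc)
      simp only [X.tau_single_zero A r l b hcc, X.tau_single_neg A r k b ha,
        map_add, map_smul, Lbk]
    -- (-1,1)
    · by_cases hbl : 1 ≤ b.1 l
      · have Kbl := X.tau_single_neg A r k ⟨_, (X.sub_mem_iff b.2 l hcc).mpr hbl⟩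
          (show X.ip (esingle k) (b.1 - esingle l) = -1 by rw [sk']; exact ha)
        have Lbk := X.tau_single_one A r l ⟨_, X.add_mem b.2 k ha⟩
          (show X.ip (esingle l) (b.1 + esingle k) = 1 by rw [sl]; exact hcc)
          (show 1 ≤ (b.1 + esingle k) l by rw [cl]; exact hbl)
        simp only [X.tau_single_one A r l b hcc hbl, X.tau_single_neg A r k b ha,
          map_add, map_smul, Kbl, Lbk]
        rw [X.single_congr A _ _ (sub_add_eq_add_sub b.1 (esingle l) (esingle k))]
        module
        exact (X.sub_mem_iff (X.add_mem b.2 k ha) l (by rw [sl]; exact hcc)).mpr (by rw [cl]; exact hbl)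
      · have Lbk := X.tau_single_one' A r l ⟨_, X.add_mem b.2 k ha⟩
          (show X.ip (esingle l) (b.1 + esingle k) = 1 by rw [sl]; exact hcc)
          (show ¬ 1 ≤ (b.1 + esingle k) l by rw [cl]; exact hbl)
        simp only [X.tau_single_one' A r l b hcc hbl, X.tau_single_neg A r k b ha,
          map_add, map_smul, map_zero, Lbk, smul_zero, add_zero]
    -- (0,-1) impossible by hle
    · omega
    -- (0,0)
    · simp only [X.tau_single_zero A r l b hcc, X.tau_single_zero A r k b ha]
    -- (0,1)
    · by_cases hbl : 1 ≤ b.1 l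
      · have Kbl := X.tau_single_zero A r k ⟨_, (X.sub_mem_iff b.2 l hcc).mpr hbl⟩
          (show X.ip (esingle k) (b.1 - esingle l) = 0 by rw [sk']; exact ha)
        simp only [X.tau_single_one A r l b hcc hbl, X.tau_single_zero A r k b ha,
          map_smul, Kbl]
      · simp only [X.tau_single_one' A r l b hcc hbl, X.tau_single_zero A r k b ha,
          map_zero]
    -- (1,-1) impossible
    · omega
    -- (1,0) impossible
    · omega
    -- (1,1)
    · by_cases hbl : 1 ≤ b.1 l <;> by_cases hbk : 1 ≤ b.1 k
      · have Kbl := X.tau_single_one A r k ⟨_, (X.sub_mem_iff b.2 l hcc).mpr hbl⟩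
          (show X.ip (esingle k) (b.1 - esingle l) = 1 by rw [sk']; exact ha)
          (show 1 ≤ (b.1 - esingle l) k by rw [ck']; exact hbk)
        have Lbk := X.tau_single_one A r l ⟨_, (X.sub_mem_iff b.2 k ha).mpr hbk⟩
          (show X.ip (esingle l) (b.1 - esingle k) = 1 by rw [sl']; exact hcc)
          (show 1 ≤ (b.1 - esingle k) l by rw [cl']; exact hbl)
        simp only [X.tau_single_one A r l b hcc hbl, X.tau_single_one A r k b ha hbk,
          map_smul, Kbl, Lbk]
        rw [X.single_congr A _ _ (sub_right_comm b.1 (esingle l) (esingle k))]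
      · have Kbl := X.tau_single_one' A r k ⟨_, (X.sub_mem_iff b.2 l hcc).mpr hbl⟩
          (show X.ip (esingle k) (b.1 - esingle l) = 1 by rw [sk']; exact ha)
          (show ¬ 1 ≤ (b.1 - esingle l) k by rw [ck']; exact hbk)
        simp only [X.tau_single_one A r l b hcc hbl, X.tau_single_one' A r k b ha hbk,
          map_smul, map_zero, Kbl, smul_zero]
      · have Lbk := X.tau_single_one' A r l ⟨_, (X.sub_mem_iff b.2 k ha).mpr hbk⟩
          (show X.ip (esingle l) (b.1 - esingle k) = 1 by rw [sl']; exact hcc)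
          (show ¬ 1 ≤ (b.1 - esingle k) l by rw [cl']; exact hbl)
        simp only [X.tau_single_one' A r l b hcc hbl, X.tau_single_one A r k b ha hbk,
          map_smul, map_zero, Lbk, smul_zero]
      · simp only [X.tau_single_one' A r l b hcc hbl, X.tau_single_one' A r k b ha hbk,
          map_zero]

lemma comm_single (X : ADE n) (A : Type) [CommRing A] (r : A) (k l : Fin n)
    (h : X.ip (esingle k) (esingle l) = 0) (b : PosIdx X) :
    X.tau A r k (X.tau A r l (Finsupp.single b 1)) =
      X.tau A r l (X.tau A r k (Finsupp.single b 1)) := by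
  rcases le_total (X.ip (esingle k) b.1) (X.ip (esingle l) b.1) with hle | hle
  · exact X.comm_aux A r k l h b hle
  · exact (X.comm_aux A r l k (by rw [ip_comm]; exact h) b hle).symm

end ADE

/-- For nonadjacent `k, l` (i.e. `(α_k, α_l) = 0`), the maps `τ_k, τ_l` on the free
`ℤ[r]`-module `V₀` with basis `{x_β : β ∈ Φ⁺}` commute: `τ_k τ_l = τ_l τ_k`. -/
theorem tau_comm {n : ℕ} (X : ADE n) (k l : Fin n)
    (h : X.ip (esingle k) (esingle l) = 0) :
    (ADE.tau X (Polynomial ℤ) Polynomial.X k) ∘ₗ (ADE.tau X (Polynomial ℤ) Polynomial.X l) =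
      (ADE.tau X (Polynomial ℤ) Polynomial.X l) ∘ₗ (ADE.tau X (Polynomial ℤ) Polynomial.X k) := by
  refine Finsupp.lhom_ext fun b s => ?_
  have hs : (Finsupp.single b s : ADE.LKMod X (Polynomial ℤ)) = s • Finsupp.single b 1 := by
    rw [Finsupp.smul_single, smul_eq_mul, mul_one]
  rw [LinearMap.comp_apply, LinearMap.comp_apply, hs, map_smul, map_smul, map_smul, map_smul,
    X.comm_single (Polynomial ℤ) Polynomial.X k l h b]
end

section
/- With τ_k as in the Lawrence–Krammer-type representation, the assignment s_k ↦ τ_k extends to a monoid homomorphism from the positive Artin monoid B⁺ of type A, D, or E to End(V₀). -/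
namespace ADE
variable {n : ℕ} (X : ADE n)

lemma ip_symm (v w : Fin n → ℤ) : X.ip v w = X.ip w v := by
  unfold ip; rw [Finset.sum_comm]
  refine Finset.sum_congr rfl fun i _ => Finset.sum_congr rfl fun j _ => ?_
  rw [X.symm]; ring

lemma ip_smul_left (a : ℤ) (v w : Fin n → ℤ) : X.ip (a • v) w = a * X.ip v w := by
  simp [ip, Finset.mul_sum, mul_assoc]

lemma ip_smul_right (a : ℤ) (v w : Fin n → ℤ) : X.ip v (a • w) = a * X.ip v w := by
  rw [ip_symm, ip_smul_left, ip_symm]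

lemma ip_single_single (k l : Fin n) : X.ip (esingle k) (esingle l) = X.C k l := by
  simp [ip, esingle, Pi.single_apply]

end ADE
namespace ADE
variable {n : ℕ} (X : ADE n)

lemma even_ip_self (v : Fin n → ℤ) : Even (X.ip v v) := by
  classical
  have key : ∀ s : Finset (Fin n),
      Even (X.ip (∑ i ∈ s, Pi.single i (v i)) (∑ i ∈ s, Pi.single i (v i))) := by
    intro s
    induction s using Finset.induction_on with
    | empty =>
      simp [ip]
    | @insert a s ha ih =>
      rw [Finset.sum_insert ha]
      set x : Fin n → ℤ := Pi.single a (v a)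
      set y : Fin n → ℤ := ∑ i ∈ s, Pi.single i (v i)
      have hx : x = v a • esingle a := by
        ext j; simp [x, esingle, Pi.single_apply]
      have hxx : Even (X.ip x x) := by
        rw [hx, ip_smul_left, ip_smul_right, ip_single_single, X.diag]
        exact ⟨v a * (v a), by ring⟩
      have e : X.ip (x + y) (x + y) = X.ip x x + (X.ip y y + 2 * X.ip x y) := by
        rw [ip_add_left, ip_add_right, ip_add_right, ip_symm X y x]; ring
      rw [e]
      exact hxx.add (ih.add (even_two_mul _))
  have hv : v = ∑ i, Pi.single i (v i) := (Finset.univ_sum_single v).symm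
  rw [hv]; exact key Finset.univ

lemma two_le_ip_self (v : Fin n → ℤ) (hv : v ≠ 0) : 2 ≤ X.ip v v := by
  have h1 : 0 < X.ip v v := X.posdef v hv
  obtain ⟨m, hm⟩ := X.even_ip_self v
  omega

lemma pos_or_neg (v : Fin n → ℤ) (hv : X.ip v v = 2) :
    (∀ j, 0 ≤ v j) ∨ (∀ j, v j ≤ 0) := by
  by_contra h
  push_neg at h
  obtain ⟨⟨j₁, hj₁⟩, ⟨j₂, hj₂⟩⟩ := h
  set p : Fin n → ℤ := fun i => max (v i) 0 with hp
  set m : Fin n → ℤ := fun i => max (-v i) 0 with hm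
  have hv' : v = p - m := by ext i; simp only [hp, hm, Pi.sub_apply]; omega
  have hp0 : p ≠ 0 := by
    intro h0
    have h1 : p j₂ = 0 := by rw [h0]; rfl
    simp only [hp] at h1
    omega
  have hm0 : m ≠ 0 := by
    intro h0
    have h1 : m j₁ = 0 := by rw [h0]; rfl
    simp only [hm] at h1
    omega
  have hpm : X.ip p m ≤ 0 := by
    unfold ip
    apply Finset.sum_nonpos; intro i _
    apply Finset.sum_nonpos; intro j _
    by_cases hij : i = j
    · subst hij
      rcases le_or_gt (v i) 0 with h' | h'
      · have : p i = 0 := by simp [hp]; omega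
        simp [this]
      · have : m i = 0 := by simp [hm]; omega
        simp [this]
    · have hpi : 0 ≤ p i := by simp [hp]
      have hmj : 0 ≤ m j := by simp [hm]
      rcases X.offdiag i j hij with h0 | h1
      · simp [h0]
      · rw [h1]; nlinarith
  have e : X.ip v v = X.ip p p + X.ip m m - 2 * X.ip p m := by
    rw [hv', ip_sub_left, ip_sub_right, ip_sub_right, ip_symm X m p]; ring
  have h2p := X.two_le_ip_self p hp0
  have h2m := X.two_le_ip_self m hm0
  omega

end ADE

lemma esingle_nonneg {n : ℕ} (k : Fin n) (j : Fin n) : 0 ≤ esingle k j := by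
  simp only [esingle, Pi.single_apply]; split <;> omega

namespace ADE
variable {n : ℕ} (X : ADE n)

lemma esingle_mem (k : Fin n) : esingle k ∈ X.Pos := by
  refine ⟨?_, esingle_nonneg k, ?_⟩
  · intro h0
    have := congrFun h0 k
    simp [esingle] at this
  · rw [ip_single_single, X.diag]

lemma ip_single_cases (k : Fin n) (β : Fin n → ℤ) (hβ : β ∈ X.Pos) :
    X.ip (esingle k) β = -1 ∨ X.ip (esingle k) β = 0 ∨ X.ip (esingle k) β = 1 ∨
    (X.ip (esingle k) β = 2 ∧ β = esingle k) := by
  obtain ⟨hne, hnn, h2⟩ := hβ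
  set t := X.ip (esingle k) β with ht
  set w : Fin n → ℤ := (2:ℤ) • β - t • esingle k with hw
  have hww : X.ip w w = 8 - 2 * t ^ 2 := by
    rw [hw]
    simp only [ip_sub_left, ip_sub_right, ip_smul_left, ip_smul_right,
      ip_single_single, X.diag, h2]
    rw [ip_symm X β (esingle k), ← ht]
    ring
  by_cases h0 : w = 0
  · have he : (2:ℤ) • β = t • esingle k := by rwa [sub_eq_zero] at h0
    have ht4 : t ^ 2 = 4 := by
      have : X.ip w w = 0 := by rw [h0]; simp [ip]
      omega
    have hk := congrFun he k
    simp [esingle, Pi.single_apply] at hk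
    have hbk := hnn k
    have ht2 : t = 2 := by nlinarith [hnn k]
    right; right; right
    refine ⟨ht2, ?_⟩
    ext j
    have := congrFun he j
    simp [esingle, Pi.single_apply, ht2] at this ⊢
    split <;> omega
  · have hpos : 0 < X.ip w w := X.posdef w h0
    have : t ^ 2 ≤ 3 := by omega
    have h1 : -2 < t ∧ t < 2 := by constructor <;> nlinarith
    omega

lemma mem_add (k : Fin n) (β : Fin n → ℤ) (hβ : β ∈ X.Pos)
    (h : X.ip (esingle k) β = -1) : β + esingle k ∈ X.Pos := by
  obtain ⟨hne, hnn, h2⟩ := hβ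
  refine ⟨?_, ?_, ?_⟩
  · intro h0
    have h0k : β k + esingle k k = 0 := congrFun h0 k
    have hk := hnn k
    simp only [esingle, Pi.single_eq_same] at h0k
    omega
  · intro j
    have := hnn j
    have := esingle_nonneg k j
    simp [Pi.add_apply]; omega
  · rw [ip_add_left, ip_add_right, ip_add_right, h2, ip_single_single, X.diag,
      ip_symm X β (esingle k), h]
    ring

lemma mem_sub (k : Fin n) (β : Fin n → ℤ) (hβ : β ∈ X.Pos)
    (h : X.ip (esingle k) β = 1) : β - esingle k ∈ X.Pos := by
  obtain ⟨hne, hnn, h2⟩ := hβ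
  have hβk : β ≠ esingle k := by
    intro he; rw [he, ip_single_single, X.diag] at h; omega
  have hγ2 : X.ip (β - esingle k) (β - esingle k) = 2 := by
    rw [ip_sub_left, ip_sub_right, ip_sub_right, h2, ip_single_single, X.diag,
      ip_symm X β (esingle k), h]
    ring
  refine ⟨?_, ?_, hγ2⟩
  · intro h0
    rw [sub_eq_zero] at h0
    exact hβk h0
  · rcases X.pos_or_neg _ hγ2 with hpos | hneg
    · exact hpos
    · exfalso
      have hbk : β k ≤ 1 := by
        have h' : β k - esingle k k ≤ 0 := hneg k
        simp only [esingle, Pi.single_eq_same] at h'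
        omega
      have hrest : ∀ j, j ≠ k → β j = 0 := by
        intro j hj
        have h' : β j - esingle k j ≤ 0 := hneg j
        have h'' := hnn j
        simp only [esingle, Pi.single_apply, if_neg hj] at h'
        omega
      rcases (by have := hnn k; omega : β k = 0 ∨ β k = 1) with hb0 | hb1
      · apply hne; ext j
        by_cases hj : j = k
        · subst hj; exact hb0
        · exact hrest j hj
      · apply hβk; ext j
        by_cases hj : j = k
        · subst hj; simpa [esingle, Pi.single_apply]
        · simp [esingle, Pi.single_apply, hj, hrest j hj]

end ADE
namespace ADE
variable {n : ℕ} (X : ADE n) (A : Type) [CommRing A] (r : A)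

lemma tau_two (k : Fin n) {β : Fin n → ℤ} (hβ : β ∈ X.Pos)
    (h : X.ip (esingle k) β = 2) :
    tau X A r k (Finsupp.single ⟨β, hβ⟩ 1) = 0 := by
  classical
  simp [tau, h]

lemma tau_one (k : Fin n) {β : Fin n → ℤ} (hβ : β ∈ X.Pos)
    (h : X.ip (esingle k) β = 1) {γ : Fin n → ℤ} (hγ : γ ∈ X.Pos)
    (e : β - esingle k = γ) :
    tau X A r k (Finsupp.single ⟨β, hβ⟩ 1) = r • Finsupp.single ⟨γ, hγ⟩ 1 := by
  classical
  subst e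
  have hmem := X.mem_sub k β hβ h
  simp [tau, h, hmem]

lemma tau_zero (k : Fin n) {β : Fin n → ℤ} (hβ : β ∈ X.Pos)
    (h : X.ip (esingle k) β = 0) :
    tau X A r k (Finsupp.single ⟨β, hβ⟩ 1) = Finsupp.single ⟨β, hβ⟩ 1 := by
  classical
  simp [tau, h]

lemma tau_neg (k : Fin n) {β : Fin n → ℤ} (hβ : β ∈ X.Pos)
    (h : X.ip (esingle k) β = -1) {γ : Fin n → ℤ} (hγ : γ ∈ X.Pos)
    (e : β + esingle k = γ) :
    tau X A r k (Finsupp.single ⟨β, hβ⟩ 1) =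
      (1 - r ^ 2) • Finsupp.single ⟨β, hβ⟩ 1 + r • Finsupp.single ⟨γ, hγ⟩ 1 := by
  classical
  subst e
  have hmem := X.mem_add k β hβ h
  simp [tau, h, hmem]

lemma lhom_ext_single {f g : LKMod X A →ₗ[A] LKMod X A}
    (h : ∀ b : PosIdx X, f (Finsupp.single b 1) = g (Finsupp.single b 1)) : f = g := by
  apply Finsupp.lhom_ext
  intro a c
  have e : (Finsupp.single a c : LKMod X A) = c • Finsupp.single a 1 := by
    rw [Finsupp.smul_single, smul_eq_mul, mul_one]
  rw [e, map_smul, map_smul, h a]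

end ADE
namespace ADE
variable {n : ℕ} (X : ADE n) (A : Type) [CommRing A] (r : A)

lemma comm_tau (k l : Fin n) (hc : X.ip (esingle k) (esingle l) = 0) :
    (tau X A r k).comp (tau X A r l) = (tau X A r l).comp (tau X A r k) := by
  have hc' : X.ip (esingle l) (esingle k) = 0 := by rwa [ip_symm] at hc
  have hll : X.ip (esingle l) (esingle l) = 2 := by rw [ip_single_single, X.diag]
  have hkk : X.ip (esingle k) (esingle k) = 2 := by rw [ip_single_single, X.diag]
  apply lhom_ext_single
  rintro ⟨β, hβ⟩
  simp only [LinearMap.comp_apply]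
  have hka : ∀ γ : Fin n → ℤ, X.ip (esingle k) (γ + esingle l) = X.ip (esingle k) γ := by
    intro γ; rw [ip_add_right, hc, add_zero]
  have hks : ∀ γ : Fin n → ℤ, X.ip (esingle k) (γ - esingle l) = X.ip (esingle k) γ := by
    intro γ; rw [ip_sub_right, hc, sub_zero]
  have hla : ∀ γ : Fin n → ℤ, X.ip (esingle l) (γ + esingle k) = X.ip (esingle l) γ := by
    intro γ; rw [ip_add_right, hc', add_zero]
  have hls : ∀ γ : Fin n → ℤ, X.ip (esingle l) (γ - esingle k) = X.ip (esingle l) γ := by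
    intro γ; rw [ip_sub_right, hc', sub_zero]
  rcases X.ip_single_cases k β hβ with ha | ha | ha | ⟨ha, hbk⟩ <;>
    rcases X.ip_single_cases l β hβ with hb | hb | hb | ⟨hb, hbl⟩
  -- a = -1
  · -- b = -1
    have m1 : β + esingle k ∈ X.Pos := X.mem_add k β hβ ha
    have m2 : β + esingle l ∈ X.Pos := X.mem_add l β hβ hb
    have m3 : β + esingle k + esingle l ∈ X.Pos :=
      X.mem_add l _ m1 (by rw [hla]; exact hb)
    rw [X.tau_neg A r l hβ hb m2 rfl, X.tau_neg A r k hβ ha m1 rfl]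
    simp only [map_add, map_smul]
    rw [X.tau_neg A r k hβ ha m1 rfl,
      X.tau_neg A r k m2 (by rw [hka]; exact ha) m3 (by abel),
      X.tau_neg A r l hβ hb m2 rfl,
      X.tau_neg A r l m1 (by rw [hla]; exact hb) m3 rfl]
    module
  · -- b = 0
    have m1 : β + esingle k ∈ X.Pos := X.mem_add k β hβ ha
    rw [X.tau_zero A r l hβ hb, X.tau_neg A r k hβ ha m1 rfl, map_add, map_smul,
      map_smul, X.tau_zero A r l hβ hb, X.tau_zero A r l m1 (by rw [hla]; exact hb)]
  · -- b = 1
    have m1 : β + esingle k ∈ X.Pos := X.mem_add k β hβ ha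
    have m2 : β - esingle l ∈ X.Pos := X.mem_sub l β hβ hb
    have m3 : β + esingle k - esingle l ∈ X.Pos :=
      X.mem_sub l _ m1 (by rw [hla]; exact hb)
    rw [X.tau_one A r l hβ hb m2 rfl, map_smul,
      X.tau_neg A r k m2 (by rw [hks]; exact ha) m3 (by abel),
      X.tau_neg A r k hβ ha m1 rfl, map_add, map_smul, map_smul,
      X.tau_one A r l hβ hb m2 rfl,
      X.tau_one A r l m1 (by rw [hla]; exact hb) m3 rfl]
    module
  · -- b = 2, β = esingle l : contradiction with a = -1
    exfalso; rw [hbl, hc] at ha; omega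
  -- a = 0
  · -- b = -1
    have m2 : β + esingle l ∈ X.Pos := X.mem_add l β hβ hb
    rw [X.tau_neg A r l hβ hb m2 rfl, X.tau_zero A r k hβ ha]
    simp only [map_add, map_smul]
    rw [X.tau_zero A r k hβ ha, X.tau_zero A r k m2 (by rw [hka]; exact ha),
      X.tau_neg A r l hβ hb m2 rfl]
  · -- b = 0
    rw [X.tau_zero A r l hβ hb, X.tau_zero A r k hβ ha, X.tau_zero A r l hβ hb]
  · -- b = 1
    have m2 : β - esingle l ∈ X.Pos := X.mem_sub l β hβ hb
    rw [X.tau_one A r l hβ hb m2 rfl, map_smul,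
      X.tau_zero A r k m2 (by rw [hks]; exact ha),
      X.tau_zero A r k hβ ha, X.tau_one A r l hβ hb m2 rfl]
  · -- b = 2, β = esingle l
    subst hbl
    rw [X.tau_two A r l hβ hll, map_zero, X.tau_zero A r k hβ ha,
      X.tau_two A r l hβ hll]
  -- a = 1
  · -- b = -1
    have m1 : β - esingle k ∈ X.Pos := X.mem_sub k β hβ ha
    have m2 : β + esingle l ∈ X.Pos := X.mem_add l β hβ hb
    have m3 : β + esingle l - esingle k ∈ X.Pos :=
      X.mem_sub k _ m2 (by rw [hka]; exact ha)
    rw [X.tau_neg A r l hβ hb m2 rfl, X.tau_one A r k hβ ha m1 rfl]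
    simp only [map_add, map_smul]
    rw [X.tau_one A r k hβ ha m1 rfl,
      X.tau_one A r k m2 (by rw [hka]; exact ha) m3 rfl,
      X.tau_neg A r l m1 (by rw [hls]; exact hb) m3 (by abel)]
    module
  · -- b = 0
    have m1 : β - esingle k ∈ X.Pos := X.mem_sub k β hβ ha
    rw [X.tau_zero A r l hβ hb, X.tau_one A r k hβ ha m1 rfl]
    simp only [map_smul]
    rw [X.tau_zero A r l m1 (by rw [hls]; exact hb)]
  · -- b = 1
    have m1 : β - esingle k ∈ X.Pos := X.mem_sub k β hβ ha
    have m2 : β - esingle l ∈ X.Pos := X.mem_sub l β hβ hb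
    have m3 : β - esingle k - esingle l ∈ X.Pos :=
      X.mem_sub l _ m1 (by rw [hls]; exact hb)
    rw [X.tau_one A r l hβ hb m2 rfl, map_smul,
      X.tau_one A r k m2 (by rw [hks]; exact ha) m3 (by abel),
      X.tau_one A r k hβ ha m1 rfl, map_smul,
      X.tau_one A r l m1 (by rw [hls]; exact hb) m3 rfl]
  · -- b = 2, β = esingle l : contradiction with a = 1
    exfalso; rw [hbl, hc] at ha; omega
  -- a = 2, β = esingle k
  · exfalso; rw [hbk, hc'] at hb; omega
  · subst hbk
    rw [X.tau_zero A r l hβ hb, X.tau_two A r k hβ hkk, map_zero]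
  · exfalso; rw [hbk, hc'] at hb; omega
  · exfalso; rw [← hbk, hb] at hc'; omega

lemma braid_tau (k l : Fin n) (hc : X.ip (esingle k) (esingle l) = -1) :
    (tau X A r k).comp ((tau X A r l).comp (tau X A r k)) =
      (tau X A r l).comp ((tau X A r k).comp (tau X A r l)) := by
  have hc' : X.ip (esingle l) (esingle k) = -1 := by rwa [ip_symm] at hc
  have hll : X.ip (esingle l) (esingle l) = 2 := by rw [ip_single_single, X.diag]
  have hkk : X.ip (esingle k) (esingle k) = 2 := by rw [ip_single_single, X.diag]
  apply lhom_ext_single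
  rintro ⟨β, hβ⟩
  simp only [LinearMap.comp_apply]
  have hka : ∀ γ : Fin n → ℤ, X.ip (esingle k) (γ + esingle l) = X.ip (esingle k) γ - 1 := by
    intro γ; rw [ip_add_right, hc]; ring
  have hks : ∀ γ : Fin n → ℤ, X.ip (esingle k) (γ - esingle l) = X.ip (esingle k) γ + 1 := by
    intro γ; rw [ip_sub_right, hc]; ring
  have hkaK : ∀ γ : Fin n → ℤ, X.ip (esingle k) (γ + esingle k) = X.ip (esingle k) γ + 2 := by
    intro γ; rw [ip_add_right, hkk]
  have hksK : ∀ γ : Fin n → ℤ, X.ip (esingle k) (γ - esingle k) = X.ip (esingle k) γ - 2 := by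
    intro γ; rw [ip_sub_right, hkk]
  have hla : ∀ γ : Fin n → ℤ, X.ip (esingle l) (γ + esingle k) = X.ip (esingle l) γ - 1 := by
    intro γ; rw [ip_add_right, hc']; ring
  have hls : ∀ γ : Fin n → ℤ, X.ip (esingle l) (γ - esingle k) = X.ip (esingle l) γ + 1 := by
    intro γ; rw [ip_sub_right, hc']; ring
  have hlaL : ∀ γ : Fin n → ℤ, X.ip (esingle l) (γ + esingle l) = X.ip (esingle l) γ + 2 := by
    intro γ; rw [ip_add_right, hll]
  have hlsL : ∀ γ : Fin n → ℤ, X.ip (esingle l) (γ - esingle l) = X.ip (esingle l) γ - 2 := by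
    intro γ; rw [ip_sub_right, hll]
  have hkl : k ≠ l := by
    intro h; rw [h, hll] at hc; omega
  rcases X.ip_single_cases k β hβ with ha | ha | ha | ⟨ha, hbk⟩ <;>
    rcases X.ip_single_cases l β hβ with hb | hb | hb | ⟨hb, hbl⟩
  -- a = -1
  · -- b = -1 : impossible
    exfalso
    have ha' : X.ip β (esingle k) = -1 := by rw [ip_symm]; exact ha
    have hb' : X.ip β (esingle l) = -1 := by rw [ip_symm]; exact hb
    have h0 : X.ip (β + esingle k + esingle l) (β + esingle k + esingle l) = 0 := by
      simp only [ip_add_left, ip_add_right, hβ.2.2, ha, ha', hb, hb', hc, hc', hkk, hll]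
      ring
    have hz : β + esingle k + esingle l = 0 := by
      by_contra h1
      have := X.posdef _ h1
      have h2 : (0:ℤ) < X.ip (β + esingle k + esingle l) (β + esingle k + esingle l) := this
      omega
    have := congrFun hz k
    have hβk := hβ.2.1 k
    simp only [Pi.add_apply, Pi.zero_apply, esingle, Pi.single_eq_same,
      Pi.single_apply, if_neg (Ne.symm hkl)] at this
    omega
  · -- b = 0
    have m1 : β + esingle k ∈ X.Pos := X.mem_add k β hβ ha
    have hb1 : X.ip (esingle l) (β + esingle k) = -1 := by rw [hla, hb]; ring
    have m2 : β + esingle k + esingle l ∈ X.Pos := X.mem_add l _ m1 hb1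
    have ha1 : X.ip (esingle k) (β + esingle k) = 1 := by rw [hkaK, ha]; ring
    have ha2 : X.ip (esingle k) (β + esingle k + esingle l) = 0 := by rw [hka, ha1]; ring
    simp only [map_add, map_smul, map_zero, smul_zero, add_zero, zero_add, smul_add,
      X.tau_neg A r k hβ ha m1 rfl, X.tau_zero A r l hβ hb,
      X.tau_neg A r l m1 hb1 m2 rfl, X.tau_one A r k m1 ha1 hβ (by abel),
      X.tau_zero A r k m2 ha2]
    module
  · -- b = 1
    have m1 : β + esingle k ∈ X.Pos := X.mem_add k β hβ ha
    have m2 : β - esingle l ∈ X.Pos := X.mem_sub l β hβ hb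
    have hb1 : X.ip (esingle l) (β + esingle k) = 0 := by rw [hla, hb]; ring
    have ha1 : X.ip (esingle k) (β - esingle l) = 0 := by rw [hks, ha]; ring
    have ha2 : X.ip (esingle k) (β + esingle k) = 1 := by rw [hkaK, ha]; ring
    have hb2 : X.ip (esingle l) (β - esingle l) = -1 := by rw [hlsL, hb]; ring
    simp only [map_add, map_smul, map_zero, smul_zero, add_zero, zero_add, smul_add,
      X.tau_neg A r k hβ ha m1 rfl, X.tau_one A r l hβ hb m2 rfl,
      X.tau_zero A r l m1 hb1, X.tau_zero A r k m2 ha1,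
      X.tau_one A r k m1 ha2 hβ (by abel), X.tau_neg A r l m2 hb2 hβ (by abel)]
    module
  · -- b = 2 : β = esingle l
    subst hbl
    have m1 : esingle l + esingle k ∈ X.Pos := X.mem_add k _ hβ ha
    have hb1 : X.ip (esingle l) (esingle l + esingle k) = 1 := by rw [hla, hll]; ring
    have ha1 : X.ip (esingle k) (esingle l + esingle k) = 1 := by rw [hkaK, hc]; ring
    simp only [map_add, map_smul, map_zero, smul_zero, add_zero, zero_add, smul_add,
      X.tau_neg A r k hβ ha m1 rfl, X.tau_two A r l hβ hll,
      X.tau_one A r l m1 hb1 (X.esingle_mem k) (by abel),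
      X.tau_two A r k (X.esingle_mem k) hkk]
  -- a = 0
  · -- b = -1
    have m2 : β + esingle l ∈ X.Pos := X.mem_add l β hβ hb
    have ha1 : X.ip (esingle k) (β + esingle l) = -1 := by rw [hka, ha]; ring
    have m3 : β + esingle l + esingle k ∈ X.Pos := X.mem_add k _ m2 ha1
    have hb1 : X.ip (esingle l) (β + esingle l) = 1 := by rw [hlaL, hb]; ring
    have hb2 : X.ip (esingle l) (β + esingle l + esingle k) = 0 := by rw [hla, hb1]; ring
    simp only [map_add, map_smul, map_zero, smul_zero, add_zero, zero_add, smul_add,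
      X.tau_zero A r k hβ ha, X.tau_neg A r l hβ hb m2 rfl,
      X.tau_neg A r k m2 ha1 m3 rfl, X.tau_one A r l m2 hb1 hβ (by abel),
      X.tau_zero A r l m3 hb2]
    module
  · -- b = 0
    simp only [X.tau_zero A r k hβ ha, X.tau_zero A r l hβ hb]
  · -- b = 1
    have m2 : β - esingle l ∈ X.Pos := X.mem_sub l β hβ hb
    have ha1 : X.ip (esingle k) (β - esingle l) = 1 := by rw [hks, ha]; ring
    have m3 : β - esingle l - esingle k ∈ X.Pos := X.mem_sub k _ m2 ha1
    have hb2 : X.ip (esingle l) (β - esingle l - esingle k) = 0 := by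
      rw [hls, hlsL, hb]; ring
    simp only [map_add, map_smul, map_zero, smul_zero, add_zero, zero_add, smul_add,
      X.tau_zero A r k hβ ha, X.tau_one A r l hβ hb m2 rfl,
      X.tau_one A r k m2 ha1 m3 rfl, X.tau_zero A r l m3 hb2]
  · -- b = 2 : β = esingle l, contradiction with a = 0
    exfalso; rw [hbl, hc] at ha; omega
  -- a = 1
  · -- b = -1
    have m1 : β - esingle k ∈ X.Pos := X.mem_sub k β hβ ha
    have m2 : β + esingle l ∈ X.Pos := X.mem_add l β hβ hb
    have hb1 : X.ip (esingle l) (β - esingle k) = 0 := by rw [hls, hb]; ring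
    have ha1 : X.ip (esingle k) (β - esingle k) = -1 := by rw [hksK, ha]; ring
    have ha2 : X.ip (esingle k) (β + esingle l) = 0 := by rw [hka, ha]; ring
    have hb2 : X.ip (esingle l) (β + esingle l) = 1 := by rw [hlaL, hb]; ring
    simp only [map_add, map_smul, map_zero, smul_zero, add_zero, zero_add, smul_add,
      X.tau_one A r k hβ ha m1 rfl, X.tau_zero A r l m1 hb1,
      X.tau_neg A r k m1 ha1 hβ (by abel), X.tau_neg A r l hβ hb m2 rfl,
      X.tau_zero A r k m2 ha2, X.tau_one A r l m2 hb2 hβ (by abel)]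
    module
  · -- b = 0
    have m1 : β - esingle k ∈ X.Pos := X.mem_sub k β hβ ha
    have hb1 : X.ip (esingle l) (β - esingle k) = 1 := by rw [hls, hb]; ring
    have m3 : β - esingle k - esingle l ∈ X.Pos := X.mem_sub l _ m1 hb1
    have ha1 : X.ip (esingle k) (β - esingle k - esingle l) = 0 := by
      rw [hks, hksK, ha]; ring
    simp only [map_add, map_smul, map_zero, smul_zero, add_zero, zero_add, smul_add,
      X.tau_one A r k hβ ha m1 rfl, X.tau_zero A r l hβ hb,
      X.tau_one A r l m1 hb1 m3 rfl, X.tau_zero A r k m3 ha1]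
  · -- b = 1 : forces β = esingle k + esingle l
    have ha' : X.ip β (esingle k) = 1 := by rw [ip_symm]; exact ha
    have hb' : X.ip β (esingle l) = 1 := by rw [ip_symm]; exact hb
    have h0 : X.ip (β - esingle k - esingle l) (β - esingle k - esingle l) = 0 := by
      simp only [ip_sub_left, ip_sub_right, hβ.2.2, ha, ha', hb, hb', hc, hc', hkk, hll]
      ring
    have hz : β - esingle k - esingle l = 0 := by
      by_contra h1
      have h2 : (0:ℤ) < X.ip (β - esingle k - esingle l) (β - esingle k - esingle l) :=
        X.posdef _ h1
      omega
    have hβe : β = esingle k + esingle l := by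
      ext j
      have := congrFun hz j
      simp only [Pi.sub_apply, Pi.zero_apply, Pi.add_apply] at this ⊢
      omega
    subst hβe
    simp only [map_add, map_smul, map_zero, smul_zero, add_zero, zero_add, smul_add,
      X.tau_one A r k hβ ha (X.esingle_mem l) (by abel),
      X.tau_one A r l hβ hb (X.esingle_mem k) (by abel),
      X.tau_two A r l (X.esingle_mem l) hll, X.tau_two A r k (X.esingle_mem k) hkk]
  · -- b = 2 : β = esingle l, contradiction with a = 1
    exfalso; rw [hbl, hc] at ha; omega
  -- a = 2 : β = esingle k
  · -- b = -1
    subst hbk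
    have m1 : esingle k + esingle l ∈ X.Pos := X.mem_add l _ hβ hb
    have ha1 : X.ip (esingle k) (esingle k + esingle l) = 1 := by rw [hka, hkk]; ring
    simp only [map_add, map_smul, map_zero, smul_zero, add_zero, zero_add, smul_add,
      X.tau_two A r k hβ hkk, X.tau_neg A r l hβ hb m1 rfl,
      X.tau_one A r k m1 ha1 (X.esingle_mem l) (by abel),
      X.tau_two A r l (X.esingle_mem l) hll]
  · -- b = 0 : contradiction
    exfalso; rw [hbk, hc'] at hb; omega
  · -- b = 1 : contradiction
    exfalso; rw [hbk, hc'] at hb; omega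
  · -- b = 2 : contradiction
    exfalso; rw [← hbk, hb] at hc'; omega

end ADE

/-- The braid relations of the Artin monoid of simply-laced type:
`s_k s_l = s_l s_k` for nonadjacent `k, l` and `s_k s_l s_k = s_l s_k s_l` for
adjacent `k, l`. -/
inductive BraidRel {n : ℕ} (X : ADE n) : FreeMonoid (Fin n) → FreeMonoid (Fin n) → Prop
  | comm (k l : Fin n) : X.ip (esingle k) (esingle l) = 0 →
      BraidRel X (FreeMonoid.of k * FreeMonoid.of l) (FreeMonoid.of l * FreeMonoid.of k)
  | braid (k l : Fin n) : X.ip (esingle k) (esingle l) = -1 →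
      BraidRel X (FreeMonoid.of k * FreeMonoid.of l * FreeMonoid.of k)
        (FreeMonoid.of l * FreeMonoid.of k * FreeMonoid.of l)

/-- The positive Artin monoid `B⁺` of simply-laced type: the monoid presented by
generators `s_1, …, s_n` and the braid relations. -/
abbrev ArtinMonoid {n : ℕ} (X : ADE n) := (conGen (BraidRel X)).Quotient

/-- The assignment `s_k ↦ τ_k` extends to a monoid homomorphism from the positive
Artin monoid `B⁺` of type `A`, `D` or `E` to `End(V₀)`. -/

theorem exists_monoidHom_tau {n : ℕ} (X : ADE n) :
    ∃ φ : ArtinMonoid X →* Module.End (Polynomial ℤ) (ADE.LKMod X (Polynomial ℤ)),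
      ∀ k : Fin n,
        φ (Con.mk' (conGen (BraidRel X)) (FreeMonoid.of k)) =
          ADE.tau X (Polynomial ℤ) Polynomial.X k := by
  classical
  set F : FreeMonoid (Fin n) →* Module.End (Polynomial ℤ) (ADE.LKMod X (Polynomial ℤ)) :=
    FreeMonoid.lift fun k => (ADE.tau X (Polynomial ℤ) Polynomial.X k :
      Module.End (Polynomial ℤ) (ADE.LKMod X (Polynomial ℤ))) with hF
  have hle : conGen (BraidRel X) ≤ Con.ker F := by
    apply Con.conGen_le.mpr
    intro x y hxy
    rw [Con.ker_rel]
    cases hxy with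
    | comm k l h0 =>
      simp only [hF, map_mul, FreeMonoid.lift_eval_of]
      rw [Module.End.mul_eq_comp, Module.End.mul_eq_comp]
      exact X.comm_tau (Polynomial ℤ) Polynomial.X k l h0
    | braid k l h0 =>
      simp only [hF, map_mul, FreeMonoid.lift_eval_of]
      rw [mul_assoc, mul_assoc, Module.End.mul_eq_comp, Module.End.mul_eq_comp,
        Module.End.mul_eq_comp, Module.End.mul_eq_comp]
      exact X.braid_tau (Polynomial ℤ) Polynomial.X k l h0
  refine ⟨(conGen (BraidRel X)).lift F hle, ?_⟩
  intro k
  rw [Con.lift_mk', hF, FreeMonoid.lift_eval_of]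
end

section
/- The system of Lawrence–Krammer equations (Table 1) for the polynomials T_{k,β} over ℤ[r^{±1}] has a unique solution. -/
namespace ADE

variable {n : ℕ}

/-- The index type of the basis `{x_β : β ∈ Φ⁺}`. -/
abbrev PosIdx' (X : ADE n) := {β : Fin n → ℤ // β ∈ X.Pos}

/-- The Lawrence–Krammer equations of Table 1 of Cohen–Wales for the coefficients
`T_{k,β}` (`β ∈ Φ⁺`), over a coefficient ring `A` with distinguished invertible
element `r` (with inverse `rinv`):
* `T_{k,α_l} = 0` for `k ≠ l`;
* `T_{k,α_k} = r⁴`;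
* `T_{k,α_k+α_l} = r⁵ - r³` for adjacent `k, l`;
* `T_{k,β} = r T_{k,β-α_l}` if `(α_l,β) = 1` and `(α_k,α_l) = 0`;
* `T_{k,β} = T_{l,β-α_k-α_l} + (r - r⁻¹) T_{k,β-α_l}` if `(α_k,β) = 0`,
  `(α_l,β) = 1`, `(α_k,α_l) = -1`;
* `T_{k,β} = r⁻¹ T_{l,β-α_l} + (r - r⁻¹) T_{k,β-α_l}` if `(α_k,β) = -1`,
  `(α_l,β) = 1`, `(α_k,α_l) = -1`;
* `T_{k,β} = r T_{l,β-α_k}` if `(α_k,β) = 1`, `(α_l,β) = 0`, `(α_k,α_l) = -1`. -/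
def TableRels (X : ADE n) (A : Type) [CommRing A] (r rinv : A)
    (T : Fin n → ADE.PosIdx' X → A) : Prop :=
  (∀ (k l : Fin n), k ≠ l → ∀ b : ADE.PosIdx' X, b.1 = esingle l → T k b = 0) ∧
  (∀ (k : Fin n) (b : ADE.PosIdx' X), b.1 = esingle k → T k b = r ^ 4) ∧
  (∀ (k l : Fin n) (b : ADE.PosIdx' X), X.ip (esingle k) (esingle l) = -1 →
      b.1 = esingle k + esingle l → T k b = r ^ 5 - r ^ 3) ∧
  (∀ (k l : Fin n) (b c : ADE.PosIdx' X), X.ip (esingle l) b.1 = 1 →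
      X.ip (esingle k) (esingle l) = 0 → b.1 = c.1 + esingle l →
      T k b = r * T k c) ∧
  (∀ (k l : Fin n) (b c d : ADE.PosIdx' X), X.ip (esingle k) b.1 = 0 →
      X.ip (esingle l) b.1 = 1 → X.ip (esingle k) (esingle l) = -1 →
      b.1 = c.1 + esingle k + esingle l → b.1 = d.1 + esingle l →
      T k b = T l c + (r - rinv) * T k d) ∧
  (∀ (k l : Fin n) (b c d : ADE.PosIdx' X), X.ip (esingle k) b.1 = -1 →
      X.ip (esingle l) b.1 = 1 → X.ip (esingle k) (esingle l) = -1 →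
      b.1 = c.1 + esingle l → b.1 = d.1 + esingle l →
      T k b = rinv * T l c + (r - rinv) * T k d) ∧
  (∀ (k l : Fin n) (b c : ADE.PosIdx' X), X.ip (esingle k) b.1 = 1 →
      X.ip (esingle l) b.1 = 0 → X.ip (esingle k) (esingle l) = -1 →
      b.1 = c.1 + esingle k → T k b = r * T l c)

end ADE

namespace LK

open ADE

variable {n : ℕ} (X : ADE n)

abbrev L := LaurentPolynomial ℤ

noncomputable def rr : L := LaurentPolynomial.T 1
noncomputable def ri : L := LaurentPolynomial.T (-1)

lemma rr_mul_ri : (rr : L) * ri = 1 := by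
  rw [rr, ri, ← LaurentPolynomial.T_add]
  norm_num

lemma esingle_apply (i j : Fin n) : esingle i j = if i = j then 1 else 0 := by
  simp [esingle, Pi.single_apply, eq_comm]

lemma esingle_self (i : Fin n) : esingle i i = 1 := by simp [esingle_apply]

lemma esingle_ne {i j : Fin n} (h : i ≠ j) : esingle i j = 0 := by
  simp [esingle_apply, h]

variable {X}

lemma ip_add_right (u v w : Fin n → ℤ) : X.ip u (v + w) = X.ip u v + X.ip u w := by
  simp [ip, mul_add, Finset.sum_add_distrib]

lemma ip_sub_right (u v w : Fin n → ℤ) : X.ip u (v - w) = X.ip u v - X.ip u w := by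
  simp [ip, mul_sub, Finset.sum_sub_distrib]

lemma ip_add_left (u v w : Fin n → ℤ) : X.ip (u + v) w = X.ip u w + X.ip v w := by
  simp [ip, add_mul, Finset.sum_add_distrib]

lemma ip_sub_left (u v w : Fin n → ℤ) : X.ip (u - v) w = X.ip u w - X.ip v w := by
  simp [ip, sub_mul, Finset.sum_sub_distrib]

lemma ip_symm (v w : Fin n → ℤ) : X.ip v w = X.ip w v := by
  rw [ip, ip, Finset.sum_comm]
  apply Finset.sum_congr rfl; intro i _
  apply Finset.sum_congr rfl; intro j _
  rw [X.symm]; ring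

lemma ip_esingle_left (k : Fin n) (w : Fin n → ℤ) :
    X.ip (esingle k) w = ∑ j, X.C k j * w j := by
  rw [ip]
  rw [Finset.sum_eq_single k]
  · apply Finset.sum_congr rfl; intro j _; rw [esingle_self]; ring
  · intro i _ hi
    apply Finset.sum_eq_zero; intro j _
    rw [esingle_ne (Ne.symm hi)]; ring
  · intro h; exact absurd (Finset.mem_univ k) h

lemma ip_esingle_esingle (k l : Fin n) : X.ip (esingle k) (esingle l) = X.C k l := by
  rw [ip_esingle_left, Finset.sum_eq_single l]
  · rw [esingle_self]; ring
  · intro j _ hj; rw [esingle_ne (Ne.symm hj)]; ring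
  · intro h; exact absurd (Finset.mem_univ l) h

lemma ip_self_esingle (k : Fin n) : X.ip (esingle k) (esingle k) = 2 := by
  rw [ip_esingle_esingle, X.diag]

lemma ip_zero_left (w : Fin n → ℤ) : X.ip 0 w = 0 := by simp [ip]

lemma ip_nonneg (v : Fin n → ℤ) : 0 ≤ X.ip v v := by
  by_cases h : v = 0
  · subst h; rw [ip_zero_left]
  · exact (X.posdef v h).le

lemma eq_of_ip_sub_self_eq_zero {v w : Fin n → ℤ} (h : X.ip (v - w) (v - w) = 0) : v = w := by
  by_contra hne
  have := X.posdef (v - w) (fun hs => hne (sub_eq_zero.mp hs))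
  rw [ADE.ip] at h
  omega

/-- height of a root is at least 1 -/
lemma htZ_pos {b : Fin n → ℤ} (hb : b ∈ X.Pos) : 1 ≤ htZ b := by
  obtain ⟨hne, hnn, -⟩ := hb
  have : ∃ j, b j ≠ 0 := by
    by_contra h; push_neg at h; exact hne (funext h)
  obtain ⟨j, hj⟩ := this
  have h1 : 1 ≤ b j := lt_of_le_of_ne (hnn j) (Ne.symm hj)
  calc (1:ℤ) ≤ b j := h1
  _ ≤ ∑ i, b i := Finset.single_le_sum (fun i _ => hnn i) (Finset.mem_univ j)

lemma htZ_add (v w : Fin n → ℤ) : htZ (v + w) = htZ v + htZ w := by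
  simp [htZ, Finset.sum_add_distrib]

lemma htZ_esingle (i : Fin n) : htZ (esingle i) = 1 := by
  rw [htZ, Finset.sum_eq_single i]
  · exact esingle_self i
  · intro j _ hj; exact esingle_ne (Ne.symm hj)
  · intro h; exact absurd (Finset.mem_univ i) h

/-- membership helper: nonneg coords and norm 2 give a positive root -/
lemma memPos_of {v : Fin n → ℤ} (hnn : ∀ j, 0 ≤ v j) (h2 : X.ip v v = 2) : v ∈ X.Pos := by
  refine ⟨?_, hnn, h2⟩
  rintro rfl
  rw [ip_zero_left] at h2; omega

lemma pos_norm {b : Fin n → ℤ} (hb : b ∈ X.Pos) : X.ip b b = 2 := hb.2.2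

lemma pos_nonneg {b : Fin n → ℤ} (hb : b ∈ X.Pos) (j : Fin n) : 0 ≤ b j := hb.2.1 j

/-- two positive roots with inner product 2 are equal -/
lemma eq_of_ip_eq_two {b c : Fin n → ℤ} (hb : b ∈ X.Pos) (hc : c ∈ X.Pos) 
    (h : X.ip b c = 2) : b = c := by
  apply eq_of_ip_sub_self_eq_zero (X := X)
  rw [ip_sub_left, ip_sub_right, ip_sub_right, pos_norm hb, pos_norm hc, ip_symm c b, h]
  ring

end LK
namespace LK

open ADE

variable {n : ℕ} {X : ADE n}

lemma ip_self_eq_zero {v : Fin n → ℤ} (h : X.ip v v = 0) : v = 0 := by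
  have := eq_of_ip_sub_self_eq_zero (X := X) (v := v) (w := 0) (by
    rw [sub_zero, h])
  simpa using this

lemma ip_esingle_le_two {b : Fin n → ℤ} (hb : b ∈ X.Pos) (k : Fin n) :
    X.ip (esingle k) b ≤ 2 := by
  have h := ip_nonneg (X := X) (b - esingle k)
  rw [ip_sub_left, ip_sub_right, ip_sub_right, pos_norm hb, ip_self_esingle,
    ip_symm b (esingle k)] at h
  omega

lemma neg_one_le_ip_esingle {b : Fin n → ℤ} (hb : b ∈ X.Pos) (k : Fin n) :
    -1 ≤ X.ip (esingle k) b := by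
  have h : 0 ≤ X.ip (b + esingle k) (b + esingle k) := ip_nonneg _
  rw [ip_add_left, ip_add_right, ip_add_right, pos_norm hb, ip_self_esingle,
    ip_symm b (esingle k)] at h
  rcases lt_or_ge (X.ip (esingle k) b) (-1) with hlt | hge
  · exfalso
    have h2 : X.ip (esingle k) b = -2 := by omega
    have h0 : X.ip (b + esingle k) (b + esingle k) = 0 := by
      rw [ip_add_left, ip_add_right, ip_add_right, pos_norm hb, ip_self_esingle,
        ip_symm b (esingle k), h2]; ring
    have := ip_self_eq_zero h0
    have hk := congrFun this k
    simp [esingle_self] at hk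
    have := pos_nonneg hb k
    omega
  · exact hge

/-- `2 * b k ≥ ip (e k) b + ∑_{j ∈ s} b j` for `s` a set of neighbours of `k`. -/
lemma two_mul_coord_ge {b : Fin n → ℤ} (hb : b ∈ X.Pos) (k : Fin n)
    (s : Finset (Fin n)) (hs : s ⊆ Finset.univ.erase k) (hC : ∀ j ∈ s, X.C k j = -1) :
    X.ip (esingle k) b + ∑ j ∈ s, b j ≤ 2 * b k := by
  have hdecomp : X.ip (esingle k) b
      = 2 * b k + ∑ j ∈ Finset.univ.erase k, X.C k j * b j := by
    rw [ip_esingle_left, ← Finset.add_sum_erase _ _ (Finset.mem_univ k), X.diag]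
  have hle : ∑ j ∈ s, b j ≤ ∑ j ∈ Finset.univ.erase k, (- X.C k j) * b j := by
    calc ∑ j ∈ s, b j = ∑ j ∈ s, (- X.C k j) * b j := by
          apply Finset.sum_congr rfl; intro j hj; rw [hC j hj]; ring
    _ ≤ _ := by
        apply Finset.sum_le_sum_of_subset_of_nonneg hs
        intro j hj _
        have hjk : j ≠ k := Finset.ne_of_mem_erase hj
        rcases X.offdiag k j (Ne.symm hjk) with h0 | h0 <;> rw [h0] <;>
          simp [pos_nonneg hb j]
  have : ∑ j ∈ Finset.univ.erase k, (- X.C k j) * b j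
      = - ∑ j ∈ Finset.univ.erase k, X.C k j * b j := by
    rw [← Finset.sum_neg_distrib]; apply Finset.sum_congr rfl; intros; ring
  omega

lemma coord_pos_of_ip_one {b : Fin n → ℤ} (hb : b ∈ X.Pos) {k : Fin n}
    (h : 1 ≤ X.ip (esingle k) b) : 1 ≤ b k := by
  have := two_mul_coord_ge hb k ∅ (by simp) (by simp)
  simp at this; omega

lemma coord_pos_one_nbr {b : Fin n → ℤ} (hb : b ∈ X.Pos) {k l : Fin n}
    (hlk : l ≠ k) (hC : X.C k l = -1) (hbl : 1 ≤ b l)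
    (h : 0 ≤ X.ip (esingle k) b) : 1 ≤ b k := by
  have := two_mul_coord_ge hb k {l} (by simp [Finset.subset_iff, hlk]) (by simpa)
  simp at this; omega

lemma coord_pos_two_nbr {b : Fin n → ℤ} (hb : b ∈ X.Pos) {k l l' : Fin n}
    (hlk : l ≠ k) (hl'k : l' ≠ k) (hll' : l ≠ l')
    (hC : X.C k l = -1) (hC' : X.C k l' = -1) (hbl : 1 ≤ b l) (hbl' : 1 ≤ b l')
    (h : -1 ≤ X.ip (esingle k) b) : 1 ≤ b k := by
  have := two_mul_coord_ge hb k {l, l'} (by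
      intro j hj; simp at hj; rcases hj with rfl | rfl <;> simp [hlk, hl'k])
    (by intro j hj; simp at hj; rcases hj with rfl | rfl <;> assumption)
  rw [Finset.sum_pair hll'] at this; omega

/-- positive roots of height 1 are fundamental -/
lemma eq_esingle_of_htZ_one {b : Fin n → ℤ} (hb : b ∈ X.Pos) (h : htZ b = 1) :
    ∃ m, b = esingle m := by
  have hnn := hb.2.1
  have hsum : ∑ j, b j = 1 := h
  have : ∃ m, 1 ≤ b m := by
    by_contra hc; push_neg at hc
    have : ∑ j, b j ≤ 0 := Finset.sum_nonpos (fun j _ => by have := hc j; omega)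
    omega
  obtain ⟨m, hm⟩ := this
  refine ⟨m, funext fun j => ?_⟩
  rw [esingle_apply]
  have hrest : ∑ j ∈ Finset.univ.erase m, b j = 1 - b m := by
    rw [← Finset.add_sum_erase _ _ (Finset.mem_univ m)] at hsum; omega
  have hrest0 : ∀ j ∈ Finset.univ.erase m, b j = 0 := by
    by_contra hc; push_neg at hc
    obtain ⟨j, hj, hbj⟩ := hc
    have h1 : 1 ≤ b j := lt_of_le_of_ne (hnn j) (Ne.symm hbj)
    have h2 : b j ≤ ∑ i ∈ Finset.univ.erase m, b i :=
      Finset.single_le_sum (fun i _ => hnn i) hj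
    omega
  have hzero : ∑ j ∈ Finset.univ.erase m, b j = 0 := Finset.sum_eq_zero hrest0
  by_cases hjm : m = j
  · subst hjm
    simp only [if_pos rfl, if_true]
    omega
  · rw [if_neg hjm]
    exact hrest0 j (Finset.mem_erase.mpr ⟨Ne.symm hjm, Finset.mem_univ j⟩)

/-- the descent lemma: a positive root of height `≥ 2` has a fundamental root
with inner product `1` and positive coefficient. -/
lemma descent {b : Fin n → ℤ} (hb : b ∈ X.Pos) (h2 : 2 ≤ htZ b) :
    ∃ l, 1 ≤ b l ∧ X.ip (esingle l) b = 1 := by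
  have hkey : X.ip b b = ∑ i, b i * X.ip (esingle i) b := by
    rw [ip]
    apply Finset.sum_congr rfl; intro i _
    rw [ip_esingle_left, Finset.mul_sum]
    apply Finset.sum_congr rfl; intro j _; ring
  have hsum : ∑ i, b i * X.ip (esingle i) b = 2 := by rw [← hkey, pos_norm hb]
  have : ∃ l, 1 ≤ b l ∧ 1 ≤ X.ip (esingle l) b := by
    by_contra hc; push_neg at hc
    have : ∑ i, b i * X.ip (esingle i) b ≤ 0 := by
      apply Finset.sum_nonpos; intro i _
      rcases lt_or_ge (b i) 1 with hbi | hbi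
      · have h0 : b i = 0 := le_antisymm (by omega) (pos_nonneg hb i)
        rw [h0]; ring_nf; omega
      · have := hc i hbi
        have hnn := pos_nonneg hb i
        nlinarith
    omega
  obtain ⟨l, hbl, hipl⟩ := this
  refine ⟨l, hbl, ?_⟩
  rcases lt_or_ge (X.ip (esingle l) b) 2 with hlt | hge
  · omega
  · exfalso
    have h2' : X.ip (esingle l) b = 2 :=
      le_antisymm (ip_esingle_le_two hb l) hge
    have : esingle l = b := eq_of_ip_eq_two
      (memPos_of (X := X) (fun j => by rw [esingle_apply]; split <;> omega)
        (ip_self_esingle l)) hb h2'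
    rw [← this, htZ_esingle] at h2
    omega

end LK
namespace LK

open ADE

variable {n : ℕ} {X : ADE n}

lemma norm_sub1 (b x : Fin n → ℤ) :
    X.ip (b - x) (b - x) = X.ip b b - 2 * X.ip x b + X.ip x x := by
  simp only [ip_sub_left, ip_sub_right]
  rw [ip_symm b x]; ring

lemma norm_sub2 (b x y : Fin n → ℤ) :
    X.ip (b - x - y) (b - x - y)
      = X.ip b b + X.ip x x + X.ip y y - 2 * X.ip x b - 2 * X.ip y b + 2 * X.ip x y := by
  simp only [ip_sub_left, ip_sub_right]
  rw [ip_symm b x, ip_symm b y, ip_symm y x]; ring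

lemma norm_sub3 (b x y z : Fin n → ℤ) :
    X.ip (b - x - y - z) (b - x - y - z)
      = X.ip b b + X.ip x x + X.ip y y + X.ip z z
        - 2 * X.ip x b - 2 * X.ip y b - 2 * X.ip z b
        + 2 * X.ip x y + 2 * X.ip x z + 2 * X.ip y z := by
  simp only [ip_sub_left, ip_sub_right]
  rw [ip_symm b x, ip_symm b y, ip_symm b z, ip_symm y x, ip_symm z x, ip_symm z y]; ring

lemma sub1_nonneg {b : Fin n → ℤ} (hb : ∀ j, 0 ≤ b j) {l : Fin n} (hl : 1 ≤ b l) :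
    ∀ j, 0 ≤ (b - esingle l) j := by
  intro j
  have := hb j
  simp only [Pi.sub_apply, esingle_apply]
  split_ifs with h
  · subst h; omega
  · omega

lemma sub2_nonneg {b : Fin n → ℤ} (hb : ∀ j, 0 ≤ b j) {l l' : Fin n} (hll' : l ≠ l')
    (hl : 1 ≤ b l) (hl' : 1 ≤ b l') : ∀ j, 0 ≤ (b - esingle l - esingle l') j := by
  intro j
  have hj := hb j
  have h1 : (b - esingle l - esingle l') j
      = b j - (if l = j then 1 else 0) - (if l' = j then 1 else 0) := by
    simp [esingle_apply]
  rw [h1]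
  rcases eq_or_ne l j with e1 | e1 <;> rcases eq_or_ne l' j with e2 | e2
  · exact absurd (e1.trans e2.symm) hll'
  · subst e1; simp only [if_pos rfl, if_neg e2]; omega
  · subst e2; simp only [if_pos rfl, if_neg e1]; omega
  · simp only [if_neg e1, if_neg e2]; omega

lemma sub3_nonneg {b : Fin n → ℤ} (hb : ∀ j, 0 ≤ b j) {l l' l'' : Fin n}
    (h1 : l ≠ l') (h2 : l ≠ l'') (h3 : l' ≠ l'')
    (hl : 1 ≤ b l) (hl' : 1 ≤ b l') (hl'' : 1 ≤ b l'') :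
    ∀ j, 0 ≤ (b - esingle l - esingle l' - esingle l'') j := by
  intro j
  have hj := hb j
  have he : (b - esingle l - esingle l' - esingle l'') j
      = b j - (if l = j then 1 else 0) - (if l' = j then 1 else 0)
        - (if l'' = j then 1 else 0) := by
    simp [esingle_apply]
  rw [he]
  rcases eq_or_ne l j with e1 | e1 <;> rcases eq_or_ne l' j with e2 | e2 <;>
    rcases eq_or_ne l'' j with e3 | e3
  · exact absurd (e1.trans e2.symm) h1
  · exact absurd (e1.trans e2.symm) h1
  · exact absurd (e1.trans e3.symm) h2
  · subst e1; simp only [if_pos rfl, if_neg e2, if_neg e3]; omega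
  · exact absurd (e2.trans e3.symm) h3
  · subst e2; simp only [if_pos rfl, if_neg e1, if_neg e3]; omega
  · subst e3; simp only [if_pos rfl, if_neg e1, if_neg e2]; omega
  · simp only [if_neg e1, if_neg e2, if_neg e3]; omega

def htN (v : Fin n → ℤ) : ℕ := (htZ v).toNat

lemma htN_pos {b : Fin n → ℤ} (hb : b ∈ X.Pos) : 1 ≤ htN b := by
  have := htZ_pos hb; unfold htN; omega

lemma htN_lt_of_add1 {b c : ADE.PosIdx' X} {l : Fin n} (h : b.1 = c.1 + esingle l) :
    htN c.1 < htN b.1 := by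
  have h1 : htZ b.1 = htZ c.1 + 1 := by rw [h, htZ_add, htZ_esingle]
  have h2 := htZ_pos c.2
  unfold htN; omega

lemma htN_lt_of_add2 {b c : ADE.PosIdx' X} {k l : Fin n}
    (h : b.1 = c.1 + esingle k + esingle l) : htN c.1 < htN b.1 := by
  have h1 : htZ b.1 = htZ c.1 + 2 := by rw [h, htZ_add, htZ_add, htZ_esingle, htZ_esingle]; ring
  have h2 := htZ_pos c.2
  unfold htN; omega

/-- `Inst T k b v` means `v` is the right-hand side of some rule instance of
Table 1 whose left-hand side is `T k b`. -/
def Inst (T : Fin n → ADE.PosIdx' X → L) (k : Fin n) (b : ADE.PosIdx' X) (v : L) : Prop :=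
  (∃ l, k ≠ l ∧ b.1 = esingle l ∧ v = 0) ∨
  (b.1 = esingle k ∧ v = rr ^ 4) ∨
  (∃ l, X.ip (esingle k) (esingle l) = -1 ∧ b.1 = esingle k + esingle l ∧
    v = rr ^ 5 - rr ^ 3) ∨
  (∃ l, ∃ c : ADE.PosIdx' X, X.ip (esingle l) b.1 = 1 ∧ X.ip (esingle k) (esingle l) = 0 ∧
    b.1 = c.1 + esingle l ∧ v = rr * T k c) ∨
  (∃ l, ∃ c d : ADE.PosIdx' X, X.ip (esingle k) b.1 = 0 ∧ X.ip (esingle l) b.1 = 1 ∧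
    X.ip (esingle k) (esingle l) = -1 ∧ b.1 = c.1 + esingle k + esingle l ∧
    b.1 = d.1 + esingle l ∧ v = T l c + (rr - ri) * T k d) ∨
  (∃ l, ∃ c d : ADE.PosIdx' X, X.ip (esingle k) b.1 = -1 ∧ X.ip (esingle l) b.1 = 1 ∧
    X.ip (esingle k) (esingle l) = -1 ∧ b.1 = c.1 + esingle l ∧
    b.1 = d.1 + esingle l ∧ v = ri * T l c + (rr - ri) * T k d) ∨
  (∃ l, ∃ c : ADE.PosIdx' X, X.ip (esingle k) b.1 = 1 ∧ X.ip (esingle l) b.1 = 0 ∧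
    X.ip (esingle k) (esingle l) = -1 ∧ b.1 = c.1 + esingle k ∧ v = rr * T l c)

variable {T : Fin n → ADE.PosIdx' X → L} {k : Fin n} {b : ADE.PosIdx' X}

lemma Inst.r1 {l : Fin n} (h : k ≠ l) (hb : b.1 = esingle l) : Inst T k b 0 := by
  unfold Inst; exact Or.inl ⟨l, h, hb, rfl⟩

lemma Inst.r2 (hb : b.1 = esingle k) : Inst T k b (rr ^ 4) := by
  unfold Inst; exact Or.inr (Or.inl ⟨hb, rfl⟩)

lemma Inst.r3 {l : Fin n} (hC : X.ip (esingle k) (esingle l) = -1)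
    (hb : b.1 = esingle k + esingle l) : Inst T k b (rr ^ 5 - rr ^ 3) := by
  unfold Inst; exact Or.inr (Or.inr (Or.inl ⟨l, hC, hb, rfl⟩))

lemma Inst.r4 {l : Fin n} {c : ADE.PosIdx' X} (hip : X.ip (esingle l) b.1 = 1)
    (hC : X.ip (esingle k) (esingle l) = 0) (hb : b.1 = c.1 + esingle l) :
    Inst T k b (rr * T k c) := by
  unfold Inst; exact Or.inr (Or.inr (Or.inr (Or.inl ⟨l, c, hip, hC, hb, rfl⟩)))

lemma Inst.r5 {l : Fin n} {c d : ADE.PosIdx' X} (hip1 : X.ip (esingle k) b.1 = 0)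
    (hip2 : X.ip (esingle l) b.1 = 1) (hC : X.ip (esingle k) (esingle l) = -1)
    (hb1 : b.1 = c.1 + esingle k + esingle l) (hb2 : b.1 = d.1 + esingle l) :
    Inst T k b (T l c + (rr - ri) * T k d) := by
  unfold Inst
  exact Or.inr (Or.inr (Or.inr (Or.inr (Or.inl ⟨l, c, d, hip1, hip2, hC, hb1, hb2, rfl⟩))))

lemma Inst.r6 {l : Fin n} {c d : ADE.PosIdx' X} (hip1 : X.ip (esingle k) b.1 = -1)
    (hip2 : X.ip (esingle l) b.1 = 1) (hC : X.ip (esingle k) (esingle l) = -1)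
    (hb1 : b.1 = c.1 + esingle l) (hb2 : b.1 = d.1 + esingle l) :
    Inst T k b (ri * T l c + (rr - ri) * T k d) := by
  unfold Inst
  exact Or.inr (Or.inr (Or.inr (Or.inr (Or.inr (Or.inl
    ⟨l, c, d, hip1, hip2, hC, hb1, hb2, rfl⟩)))))

lemma Inst.r7 {l : Fin n} {c : ADE.PosIdx' X} (hip1 : X.ip (esingle k) b.1 = 1)
    (hip2 : X.ip (esingle l) b.1 = 0) (hC : X.ip (esingle k) (esingle l) = -1)
    (hb : b.1 = c.1 + esingle k) : Inst T k b (rr * T l c) := by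
  unfold Inst
  exact Or.inr (Or.inr (Or.inr (Or.inr (Or.inr (Or.inr ⟨l, c, hip1, hip2, hC, hb, rfl⟩)))))

lemma Inst.elim' {v : L} (h : Inst T k b v) :
    (∃ l, k ≠ l ∧ b.1 = esingle l ∧ v = 0) ∨
    (b.1 = esingle k ∧ v = rr ^ 4) ∨
    (∃ l, X.ip (esingle k) (esingle l) = -1 ∧ b.1 = esingle k + esingle l ∧
      v = rr ^ 5 - rr ^ 3) ∨
    (∃ l, ∃ c : ADE.PosIdx' X, X.ip (esingle l) b.1 = 1 ∧ X.ip (esingle k) (esingle l) = 0 ∧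
      b.1 = c.1 + esingle l ∧ v = rr * T k c) ∨
    (∃ l, ∃ c d : ADE.PosIdx' X, X.ip (esingle k) b.1 = 0 ∧ X.ip (esingle l) b.1 = 1 ∧
      X.ip (esingle k) (esingle l) = -1 ∧ b.1 = c.1 + esingle k + esingle l ∧
      b.1 = d.1 + esingle l ∧ v = T l c + (rr - ri) * T k d) ∨
    (∃ l, ∃ c d : ADE.PosIdx' X, X.ip (esingle k) b.1 = -1 ∧ X.ip (esingle l) b.1 = 1 ∧
      X.ip (esingle k) (esingle l) = -1 ∧ b.1 = c.1 + esingle l ∧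
      b.1 = d.1 + esingle l ∧ v = ri * T l c + (rr - ri) * T k d) ∨
    (∃ l, ∃ c : ADE.PosIdx' X, X.ip (esingle k) b.1 = 1 ∧ X.ip (esingle l) b.1 = 0 ∧
      X.ip (esingle k) (esingle l) = -1 ∧ b.1 = c.1 + esingle k ∧ v = rr * T l c) := h

/-- The table relations hold iff `T k b` equals the RHS of every applicable rule. -/
lemma tableRels_iff (T : Fin n → ADE.PosIdx' X → L) :
    ADE.TableRels X L rr ri T ↔ ∀ k b v, Inst T k b v → T k b = v := by
  constructor
  · rintro ⟨h1, h2, h3, h4, h5, h6, h7⟩ k b v hv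
    rcases hv.elim' with ⟨l, hkl, hb, rfl⟩ | ⟨hb, rfl⟩ | ⟨l, hC, hb, rfl⟩ |
      ⟨l, c, hip, hC, hb, rfl⟩ | ⟨l, c, d, hip1, hip2, hC, hb1, hb2, rfl⟩ |
      ⟨l, c, d, hip1, hip2, hC, hb1, hb2, rfl⟩ | ⟨l, c, hip1, hip2, hC, hb, rfl⟩
    · exact h1 k l hkl b hb
    · exact h2 k b hb
    · exact h3 k l b hC hb
    · exact h4 k l b c hip hC hb
    · exact h5 k l b c d hip1 hip2 hC hb1 hb2
    · exact h6 k l b c d hip1 hip2 hC hb1 hb2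
    · exact h7 k l b c hip1 hip2 hC hb
  · intro H
    refine ⟨?_, ?_, ?_, ?_, ?_, ?_, ?_⟩
    · intro k l hkl b hb; exact H k b 0 (Inst.r1 hkl hb)
    · intro k b hb; exact H k b _ (Inst.r2 hb)
    · intro k l b hC hb; exact H k b _ (Inst.r3 hC hb)
    · intro k l b c hip hC hb; exact H k b _ (Inst.r4 hip hC hb)
    · intro k l b c d hip1 hip2 hC hb1 hb2; exact H k b _ (Inst.r5 hip1 hip2 hC hb1 hb2)
    · intro k l b c d hip1 hip2 hC hb1 hb2; exact H k b _ (Inst.r6 hip1 hip2 hC hb1 hb2)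
    · intro k l b c hip1 hip2 hC hb; exact H k b _ (Inst.r7 hip1 hip2 hC hb)

/-- `Inst` only refers to values of `T` at roots of smaller height. -/
lemma Inst_congr {T T' : Fin n → ADE.PosIdx' X → L} {k : Fin n} {b : ADE.PosIdx' X} {v : L}
    (hag : ∀ (k' : Fin n) (c : ADE.PosIdx' X), htN c.1 < htN b.1 → T k' c = T' k' c)
    (h : Inst T k b v) : Inst T' k b v := by
  rcases h.elim' with ⟨l, hkl, hb, rfl⟩ | ⟨hb, rfl⟩ | ⟨l, hC, hb, rfl⟩ |
    ⟨l, c, hip, hC, hb, rfl⟩ | ⟨l, c, d, hip1, hip2, hC, hb1, hb2, rfl⟩ |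
    ⟨l, c, d, hip1, hip2, hC, hb1, hb2, rfl⟩ | ⟨l, c, hip1, hip2, hC, hb, rfl⟩
  · exact Inst.r1 hkl hb
  · exact Inst.r2 hb
  · exact Inst.r3 hC hb
  · rw [hag k c (htN_lt_of_add1 hb)]; exact Inst.r4 hip hC hb
  · rw [hag l c (htN_lt_of_add2 hb1), hag k d (htN_lt_of_add1 hb2)]
    exact Inst.r5 hip1 hip2 hC hb1 hb2
  · rw [hag l c (htN_lt_of_add1 hb1), hag k d (htN_lt_of_add1 hb2)]
    exact Inst.r6 hip1 hip2 hC hb1 hb2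
  · rw [hag l c (htN_lt_of_add1 hb)]; exact Inst.r7 hip1 hip2 hC hb

/-- All table relations with left-hand-side root of height at most `h`. -/
def RelsUpTo (h : ℕ) (T : Fin n → ADE.PosIdx' X → L) : Prop :=
  ∀ k (b : ADE.PosIdx' X) v, htN b.1 ≤ h → Inst T k b v → T k b = v

end LK
namespace LK

open ADE

variable {n : ℕ} {X : ADE n}

lemma sub_single_mem {b : Fin n → ℤ} (hb : b ∈ X.Pos) {l : Fin n} (hl : 1 ≤ b l)
    (h1 : X.ip (esingle l) b = 1) : b - esingle l ∈ X.Pos :=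
  memPos_of (sub1_nonneg hb.2.1 hl)
    (by rw [norm_sub1, pos_norm hb, ip_self_esingle, h1]; ring)

lemma esingle_mem (l : Fin n) : esingle l ∈ X.Pos :=
  memPos_of (fun j => by rw [esingle_apply]; split <;> omega) (ip_self_esingle l)

lemma ip_split_single (m k : Fin n) (b : Fin n → ℤ) :
    X.ip (esingle m) b = X.ip (esingle m) (b - esingle k) + X.C m k := by
  rw [← ip_esingle_esingle (X := X) m k, ← ip_add_right]
  congr 1; abel

lemma coord_sub_single {b : Fin n → ℤ} {m k : Fin n} (hmk : m ≠ k)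
    (h : 1 ≤ (b - esingle k) m) : 1 ≤ b m := by
  simp only [Pi.sub_apply] at h
  rw [esingle_ne (Ne.symm hmk)] at h
  omega

lemma exists_inst (T : Fin n → ADE.PosIdx' X → L) (k : Fin n) (b : ADE.PosIdx' X) :
    ∃ v, Inst T k b v := by
  rcases eq_or_lt_of_le (htZ_pos b.2) with h1 | h2
  · obtain ⟨m, hm⟩ := eq_esingle_of_htZ_one b.2 h1.symm
    rcases eq_or_ne k m with rfl | hkm
    · exact ⟨_, Inst.r2 hm⟩
    · exact ⟨_, Inst.r1 hkm hm⟩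
  · have hht : 2 ≤ htZ b.1 := h2
    have hcle : X.ip (esingle k) b.1 ≤ 2 := ip_esingle_le_two b.2 k
    have hcge : -1 ≤ X.ip (esingle k) b.1 := neg_one_le_ip_esingle b.2 k
    have hc2 : X.ip (esingle k) b.1 ≠ 2 := by
      intro h
      have h' : esingle k = b.1 := eq_of_ip_eq_two (esingle_mem k) b.2 h
      rw [← h', htZ_esingle] at hht; omega
    rcases eq_or_ne (X.ip (esingle k) b.1) 1 with hc1 | hcne1
    · -- c = 1
      have hbk : 1 ≤ b.1 k := coord_pos_of_ip_one b.2 (by omega)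
      have hγ : b.1 - esingle k ∈ X.Pos := sub_single_mem b.2 hbk hc1
      have hbγ : b.1 = (b.1 - esingle k) + esingle k := by abel
      rcases eq_or_lt_of_le (htZ_pos hγ) with hg1 | hg2
      · obtain ⟨m, hm⟩ := eq_esingle_of_htZ_one hγ hg1.symm
        have hbm : b.1 = esingle k + esingle m := by rw [← hm]; abel
        have hCkm : X.ip (esingle k) (esingle m) = -1 := by
          have hn := pos_norm b.2
          rw [hbm, ip_add_left, ip_add_right, ip_add_right, ip_self_esingle,
            ip_self_esingle, ip_symm (esingle m) (esingle k)] at hn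
          omega
        exact ⟨_, Inst.r3 hCkm hbm⟩
      · obtain ⟨m, hγm, hipm⟩ := descent hγ hg2
        have hmk : m ≠ k := by
          intro h
          rw [h, ip_sub_right, ip_self_esingle, hc1] at hipm
          omega
        have hsplit := ip_split_single (X := X) m k b.1
        rcases X.offdiag k m (Ne.symm hmk) with hC0 | hC1
        · have hipmb : X.ip (esingle m) b.1 = 1 := by
            rw [hsplit, hipm, X.symm m k, hC0]; ring
          have hbm1 : 1 ≤ b.1 m := coord_sub_single hmk hγm
          have hδ : b.1 - esingle m ∈ X.Pos := sub_single_mem b.2 hbm1 hipmb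
          have hbm' : b.1 = (b.1 - esingle m) + esingle m := by abel
          exact ⟨_, Inst.r4 (c := ⟨_, hδ⟩) hipmb
            (by rw [ip_esingle_esingle, hC0]) hbm'⟩
        · have hipmb : X.ip (esingle m) b.1 = 0 := by
            rw [hsplit, hipm, X.symm m k, hC1]; ring
          exact ⟨_, Inst.r7 (c := ⟨_, hγ⟩) hc1 hipmb
            (by rw [ip_esingle_esingle, hC1]) hbγ⟩
    · -- c ≤ 0
      have hcle0 : X.ip (esingle k) b.1 ≤ 0 := by omega
      obtain ⟨l, hbl, hipl⟩ := descent b.2 hht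
      have hlk : l ≠ k := by
        intro h; rw [h] at hipl; omega
      have hδ : b.1 - esingle l ∈ X.Pos := sub_single_mem b.2 hbl hipl
      have hbδ : b.1 = (b.1 - esingle l) + esingle l := by abel
      rcases X.offdiag k l (Ne.symm hlk) with hC0 | hC1
      · exact ⟨_, Inst.r4 (c := ⟨_, hδ⟩) hipl (by rw [ip_esingle_esingle, hC0]) hbδ⟩
      · have hCkl : X.ip (esingle k) (esingle l) = -1 := by rw [ip_esingle_esingle, hC1]
        rcases eq_or_ne (X.ip (esingle k) b.1) 0 with hc0 | hcn0
        · have hbk : 1 ≤ b.1 k := coord_pos_one_nbr b.2 hlk hC1 hbl (by omega)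
          have hcsub : b.1 - esingle k - esingle l ∈ X.Pos := by
            apply memPos_of (sub2_nonneg b.2.2.1 (Ne.symm hlk) hbk hbl)
            rw [norm_sub2, pos_norm b.2, ip_self_esingle, ip_self_esingle,
              hc0, hipl, hCkl]
            ring
          have hb5 : b.1 = (b.1 - esingle k - esingle l) + esingle k + esingle l := by abel
          exact ⟨_, Inst.r5 (c := ⟨_, hcsub⟩) (d := ⟨_, hδ⟩) hc0 hipl hCkl hb5 hbδ⟩
        · have hcm1 : X.ip (esingle k) b.1 = -1 := by omega
          exact ⟨_, Inst.r6 (c := ⟨_, hδ⟩) (d := ⟨_, hδ⟩) hcm1 hipl hCkl hbδ hbδ⟩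

end LK
namespace LK

open ADE

variable {n : ℕ} {X : ADE n}

lemma veq_sub {b c : ADE.PosIdx' X} {l : Fin n} (h : b.1 = c.1 + esingle l) :
    c.1 = b.1 - esingle l := by rw [h]; abel

lemma veq_sub2 {b c : ADE.PosIdx' X} {k l : Fin n} (h : b.1 = c.1 + esingle k + esingle l) :
    c.1 = b.1 - esingle k - esingle l := by rw [h]; abel

lemma esingle_inj {l m : Fin n} (h : esingle l = (esingle m : Fin n → ℤ)) : l = m := by
  by_contra hne
  have := congrFun h l
  rw [esingle_self, esingle_ne (Ne.symm hne)] at this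
  omega

lemma htZ_of_add1 {b c : ADE.PosIdx' X} {l : Fin n} (h : b.1 = c.1 + esingle l) :
    htZ b.1 = htZ c.1 + 1 := by rw [h, htZ_add, htZ_esingle]

lemma htZ_of_add2 {b c : ADE.PosIdx' X} {k l : Fin n}
    (h : b.1 = c.1 + esingle k + esingle l) : htZ b.1 = htZ c.1 + 2 := by
  rw [h, htZ_add, htZ_add, htZ_esingle, htZ_esingle]; ring

lemma htZ_ge2 {b c : ADE.PosIdx' X} {l : Fin n} (h : b.1 = c.1 + esingle l) :
    2 ≤ htZ b.1 := by
  have := htZ_pos c.2; rw [htZ_of_add1 h]; omega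

lemma htZ_ge3 {b c : ADE.PosIdx' X} {k l : Fin n}
    (h : b.1 = c.1 + esingle k + esingle l) : 3 ≤ htZ b.1 := by
  have := htZ_pos c.2; rw [htZ_of_add2 h]; omega

/-- subtype elements with equal values are equal -/
lemma posIdx_ext {c c' : ADE.PosIdx' X} (h : c.1 = c'.1) : c = c' := Subtype.ext h

/-- notation-heavy helper: the inner product of a fundamental root with `b - e l`. -/
lemma ip_e_sub1 (m l : Fin n) (b : Fin n → ℤ) :
    X.ip (esingle m) (b - esingle l) = X.ip (esingle m) b - X.C m l := by
  rw [ip_sub_right, ip_esingle_esingle]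

lemma ip_e_sub2 (m k l : Fin n) (b : Fin n → ℤ) :
    X.ip (esingle m) (b - esingle k - esingle l)
      = X.ip (esingle m) b - X.C m k - X.C m l := by
  rw [ip_sub_right, ip_sub_right, ip_esingle_esingle, ip_esingle_esingle]

section Diamond

variable {T : Fin n → ADE.PosIdx' X → L} {k : Fin n} {b : ADE.PosIdx' X}

/-- induction hypothesis: all rule instances at lower heights hold -/
def IHyp (T : Fin n → ADE.PosIdx' X → L) (b : ADE.PosIdx' X) : Prop :=
  ∀ (k' : Fin n) (c : ADE.PosIdx' X) v, htN c.1 < htN b.1 → Inst T k' c v → T k' c = v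

lemma d44 (IH : IHyp T b) {l l' : Fin n} {c c' : ADE.PosIdx' X}
    (hipl : X.ip (esingle l) b.1 = 1) (hCkl : X.ip (esingle k) (esingle l) = 0)
    (hb : b.1 = c.1 + esingle l)
    (hipl' : X.ip (esingle l') b.1 = 1) (hCkl' : X.ip (esingle k) (esingle l') = 0)
    (hb' : b.1 = c'.1 + esingle l') :
    rr * T k c = rr * T k c' := by
  rcases eq_or_ne l l' with rfl | hll'
  · rw [posIdx_ext (X := X) (c := c) (c' := c')
      (by rw [veq_sub hb, veq_sub hb'])]
  · have hcv : c.1 = b.1 - esingle l := veq_sub hb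
    have hcv' : c'.1 = b.1 - esingle l' := veq_sub hb'
    have hkl : k ≠ l := by
      intro h; rw [h, ip_esingle_esingle, X.diag] at hCkl; omega
    have hkl' : k ≠ l' := by
      intro h; rw [h, ip_esingle_esingle, X.diag] at hCkl'; omega
    rcases X.offdiag l l' hll' with ha | ha
    · -- C l l' = 0 : commuting square through b - e l - e l'
      have hbl : 1 ≤ b.1 l := coord_pos_of_ip_one b.2 (by omega)
      have hbl' : 1 ≤ b.1 l' := coord_pos_of_ip_one b.2 (by omega)
      have hε : b.1 - esingle l - esingle l' ∈ X.Pos := by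
        apply memPos_of (sub2_nonneg b.2.2.1 hll' hbl hbl')
        rw [norm_sub2, pos_norm b.2, ip_self_esingle, ip_self_esingle, hipl, hipl',
          ip_esingle_esingle, ha]
        ring
      have h1 : T k c = rr * T k ⟨_, hε⟩ := by
        apply IH k c _ (htN_lt_of_add1 hb)
        apply Inst.r4 (l := l')
        · rw [hcv, ip_e_sub1, hipl', X.symm l' l, ha]; ring
        · exact hCkl'
        · rw [hcv]; dsimp only; abel
      have h2 : T k c' = rr * T k ⟨_, hε⟩ := by
        apply IH k c' _ (htN_lt_of_add1 hb')
        apply Inst.r4 (l := l)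
        · rw [hcv', ip_e_sub1, hipl, ha]; ring
        · exact hCkl
        · rw [hcv']; dsimp only; abel
      rw [h1, h2]
    · -- C l l' = -1 : then b = e l + e l', both values are 0
      have hc2 : X.ip (esingle l') c.1 = 2 := by
        rw [hcv, ip_e_sub1, hipl', X.symm l' l, ha]; ring
      have hcel : c.1 = esingle l' := (eq_of_ip_eq_two (esingle_mem l') c.2 hc2).symm
      have hcel' : c'.1 = esingle l := by
        rw [hcv', hb, hcel]; abel
      have h1 : T k c = 0 := IH k c 0 (htN_lt_of_add1 hb) (Inst.r1 hkl' hcel)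
      have h2 : T k c' = 0 := IH k c' 0 (htN_lt_of_add1 hb') (Inst.r1 hkl hcel')
      rw [h1, h2]

lemma d45 (IH : IHyp T b) {l l' : Fin n} {c c' d' : ADE.PosIdx' X}
    (hipl : X.ip (esingle l) b.1 = 1) (hCkl : X.ip (esingle k) (esingle l) = 0)
    (hb : b.1 = c.1 + esingle l)
    (hc0 : X.ip (esingle k) b.1 = 0) (hipl' : X.ip (esingle l') b.1 = 1)
    (hCkl' : X.ip (esingle k) (esingle l') = -1)
    (hb1' : b.1 = c'.1 + esingle k + esingle l') (hb2' : b.1 = d'.1 + esingle l') :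
    rr * T k c = T l' c' + (rr - ri) * T k d' := by
  have hCa : X.C k l = 0 := by rw [← ip_esingle_esingle (X := X)]; exact hCkl
  have hCb : X.C k l' = -1 := by rw [← ip_esingle_esingle (X := X)]; exact hCkl'
  have hkl : k ≠ l := fun h => by rw [h, X.diag] at hCa; omega
  have hkl' : k ≠ l' := fun h => by rw [h, X.diag] at hCb; omega
  have hll' : l ≠ l' := fun h => by rw [h, hCb] at hCa; omega
  have hcv : c.1 = b.1 - esingle l := veq_sub hb
  have hcv' : c'.1 = b.1 - esingle k - esingle l' := veq_sub2 hb1'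
  have hdv' : d'.1 = b.1 - esingle l' := veq_sub hb2'
  rcases X.offdiag l l' hll' with ha | ha
  · -- generic case C l l' = 0
    have hbl : 1 ≤ b.1 l := coord_pos_of_ip_one b.2 (by omega)
    have hbl' : 1 ≤ b.1 l' := coord_pos_of_ip_one b.2 (by omega)
    have hbk : 1 ≤ b.1 k := coord_pos_one_nbr b.2 (Ne.symm hkl') hCb hbl' (by omega)
    have hw : b.1 - esingle l - esingle l' ∈ X.Pos := by
      apply memPos_of (sub2_nonneg b.2.2.1 hll' hbl hbl')
      rw [norm_sub2, pos_norm b.2, ip_self_esingle, ip_self_esingle, hipl, hipl',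
        ip_esingle_esingle, ha]
      ring
    have hε : b.1 - esingle k - esingle l' - esingle l ∈ X.Pos := by
      apply memPos_of (sub3_nonneg b.2.2.1 hkl' hkl (Ne.symm hll') hbk hbl' hbl)
      rw [norm_sub3, pos_norm b.2, ip_self_esingle, ip_self_esingle, ip_self_esingle,
        hc0, hipl', hipl, hCkl', hCkl, ip_esingle_esingle, X.symm l' l, ha]
      ring
    have hA : T k c = T l' ⟨_, hε⟩ + (rr - ri) * T k ⟨_, hw⟩ := by
      apply IH k c _ (htN_lt_of_add1 hb)
      apply Inst.r5 (l := l')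
      · rw [hcv, ip_e_sub1, hc0, hCa]; ring
      · rw [hcv, ip_e_sub1, hipl', X.symm l' l, ha]; ring
      · exact hCkl'
      · rw [hcv]; dsimp only; abel
      · rw [hcv]; dsimp only; abel
    have hB : T l' c' = rr * T l' ⟨_, hε⟩ := by
      apply IH l' c' _ (htN_lt_of_add2 hb1')
      apply Inst.r4 (l := l)
      · rw [hcv', ip_e_sub2, hipl, X.symm l k, hCa, ha]; ring
      · rw [ip_esingle_esingle, X.symm l' l, ha]
      · rw [hcv']; dsimp only; abel
    have hC : T k d' = rr * T k ⟨_, hw⟩ := by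
      apply IH k d' _ (htN_lt_of_add1 hb2')
      apply Inst.r4 (l := l)
      · rw [hdv', ip_e_sub1, hipl, ha]; ring
      · exact hCkl
      · rw [hdv']; dsimp only; abel
    rw [hA, hB, hC]; ring
  · -- degenerate case C l l' = -1 : impossible since (e k, b) = 0
    exfalso
    have hc2 : X.ip (esingle l') c.1 = 2 := by
      rw [hcv, ip_e_sub1, hipl', X.symm l' l, ha]; ring
    have hcel : c.1 = esingle l' := (eq_of_ip_eq_two (esingle_mem l') c.2 hc2).symm
    have hbeq : b.1 = esingle l' + esingle l := by rw [hb, hcel]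
    rw [hbeq, ip_add_right, hCkl', ip_esingle_esingle, hCa] at hc0
    omega

lemma d46 (IH : IHyp T b) {l l' : Fin n} {c c' d' : ADE.PosIdx' X}
    (hipl : X.ip (esingle l) b.1 = 1) (hCkl : X.ip (esingle k) (esingle l) = 0)
    (hb : b.1 = c.1 + esingle l)
    (hcm : X.ip (esingle k) b.1 = -1) (hipl' : X.ip (esingle l') b.1 = 1)
    (hCkl' : X.ip (esingle k) (esingle l') = -1)
    (hb1' : b.1 = c'.1 + esingle l') (hb2' : b.1 = d'.1 + esingle l') :
    rr * T k c = ri * T l' c' + (rr - ri) * T k d' := by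
  have hdc' : d' = c' := posIdx_ext (by rw [veq_sub hb2', veq_sub hb1'])
  subst hdc'
  have hCa : X.C k l = 0 := by rw [← ip_esingle_esingle (X := X)]; exact hCkl
  have hCb : X.C k l' = -1 := by rw [← ip_esingle_esingle (X := X)]; exact hCkl'
  have hkl : k ≠ l := fun h => by rw [h, X.diag] at hCa; omega
  have hkl' : k ≠ l' := fun h => by rw [h, X.diag] at hCb; omega
  have hll' : l ≠ l' := fun h => by rw [h, hCb] at hCa; omega
  have hcv : c.1 = b.1 - esingle l := veq_sub hb
  have hcv' : d'.1 = b.1 - esingle l' := veq_sub hb1'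
  rcases X.offdiag l l' hll' with ha | ha
  · -- generic case C l l' = 0
    have hbl : 1 ≤ b.1 l := coord_pos_of_ip_one b.2 (by omega)
    have hbl' : 1 ≤ b.1 l' := coord_pos_of_ip_one b.2 (by omega)
    have hw : b.1 - esingle l - esingle l' ∈ X.Pos := by
      apply memPos_of (sub2_nonneg b.2.2.1 hll' hbl hbl')
      rw [norm_sub2, pos_norm b.2, ip_self_esingle, ip_self_esingle, hipl, hipl',
        ip_esingle_esingle, ha]
      ring
    have hA : T k c = ri * T l' ⟨_, hw⟩ + (rr - ri) * T k ⟨_, hw⟩ := by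
      apply IH k c _ (htN_lt_of_add1 hb)
      apply Inst.r6 (l := l')
      · rw [hcv, ip_e_sub1, hcm, hCa]; ring
      · rw [hcv, ip_e_sub1, hipl', X.symm l' l, ha]; ring
      · exact hCkl'
      · rw [hcv]; dsimp only; abel
      · rw [hcv]; dsimp only; abel
    have hB : T l' d' = rr * T l' ⟨_, hw⟩ := by
      apply IH l' d' _ (htN_lt_of_add1 hb1')
      apply Inst.r4 (l := l)
      · rw [hcv', ip_e_sub1, hipl, ha]; ring
      · rw [ip_esingle_esingle, X.symm l' l, ha]
      · rw [hcv']; dsimp only; abel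
    have hC : T k d' = rr * T k ⟨_, hw⟩ := by
      apply IH k d' _ (htN_lt_of_add1 hb1')
      apply Inst.r4 (l := l)
      · rw [hcv', ip_e_sub1, hipl, ha]; ring
      · exact hCkl
      · rw [hcv']; dsimp only; abel
    rw [hA, hB, hC]; ring
  · -- degenerate case C l l' = -1 : b = e l' + e l, everything vanishes
    have hc2 : X.ip (esingle l') c.1 = 2 := by
      rw [hcv, ip_e_sub1, hipl', X.symm l' l, ha]; ring
    have hcel : c.1 = esingle l' := (eq_of_ip_eq_two (esingle_mem l') c.2 hc2).symm
    have hbeq : b.1 = esingle l' + esingle l := by rw [hb, hcel]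
    have hdel : d'.1 = esingle l := by rw [hcv', hbeq]; abel
    have h1 : T k c = 0 := IH k c 0 (htN_lt_of_add1 hb) (Inst.r1 hkl' hcel)
    have h2 : T l' d' = 0 := IH l' d' 0 (htN_lt_of_add1 hb1')
      (Inst.r1 (fun h => hll' h.symm) hdel)
    have h3 : T k d' = 0 := IH k d' 0 (htN_lt_of_add1 hb1') (Inst.r1 hkl hdel)
    rw [h1, h2, h3]; ring


lemma eq_add3_of_norm_zero {b x y z : Fin n → ℤ}
    (h : X.ip (b - x - y - z) (b - x - y - z) = 0) : b = x + y + z := by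
  have h9 : b - x - y - z = 0 := ip_self_eq_zero h
  calc b = (b - x - y - z) + (x + y + z) := by abel
  _ = x + y + z := by rw [h9]; abel

lemma d47 (IH : IHyp T b) {l l' : Fin n} {c c' : ADE.PosIdx' X}
    (hipl : X.ip (esingle l) b.1 = 1) (hCkl : X.ip (esingle k) (esingle l) = 0)
    (hb : b.1 = c.1 + esingle l)
    (hc1 : X.ip (esingle k) b.1 = 1) (hipl' : X.ip (esingle l') b.1 = 0)
    (hCkl' : X.ip (esingle k) (esingle l') = -1)
    (hb' : b.1 = c'.1 + esingle k) :
    rr * T k c = rr * T l' c' := by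
  have hCa : X.C k l = 0 := by rw [← ip_esingle_esingle (X := X)]; exact hCkl
  have hCb : X.C k l' = -1 := by rw [← ip_esingle_esingle (X := X)]; exact hCkl'
  have hkl : k ≠ l := fun h => by rw [h, X.diag] at hCa; omega
  have hkl' : k ≠ l' := fun h => by rw [h, X.diag] at hCb; omega
  have hll' : l ≠ l' := fun h => by rw [h, hipl'] at hipl; omega
  have hcv : c.1 = b.1 - esingle l := veq_sub hb
  have hcv' : c'.1 = b.1 - esingle k := veq_sub hb'
  have hbl : 1 ≤ b.1 l := coord_pos_of_ip_one b.2 (by omega)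
  have hbk : 1 ≤ b.1 k := coord_pos_of_ip_one b.2 (by omega)
  rcases X.offdiag l l' hll' with ha | ha
  · -- generic case C l l' = 0
    have hs : b.1 - esingle l - esingle k ∈ X.Pos := by
      apply memPos_of (sub2_nonneg b.2.2.1 (Ne.symm hkl) hbl hbk)
      rw [norm_sub2, pos_norm b.2, ip_self_esingle, ip_self_esingle, hipl, hc1,
        ip_esingle_esingle, X.symm l k, hCa]
      ring
    have hA : T k c = rr * T l' ⟨_, hs⟩ := by
      apply IH k c _ (htN_lt_of_add1 hb)
      apply Inst.r7 (l := l')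
      · rw [hcv, ip_e_sub1, hc1, hCa]; ring
      · rw [hcv, ip_e_sub1, hipl', X.symm l' l, ha]; ring
      · exact hCkl'
      · rw [hcv]; dsimp only; abel
    have hB : T l' c' = rr * T l' ⟨_, hs⟩ := by
      apply IH l' c' _ (htN_lt_of_add1 hb')
      apply Inst.r4 (l := l)
      · rw [hcv', ip_e_sub1, hipl, X.symm l k, hCa]; ring
      · rw [ip_esingle_esingle, X.symm l' l, ha]
      · rw [hcv']; dsimp only; abel
    rw [hA, hB]
  · -- degenerate case C l l' = -1 : b = e l + e l' + e k
    have hzero : X.ip (b.1 - esingle l - esingle l' - esingle k)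
        (b.1 - esingle l - esingle l' - esingle k) = 0 := by
      rw [norm_sub3, pos_norm b.2, ip_self_esingle, ip_self_esingle, ip_self_esingle,
        hipl, hipl', hc1, ip_esingle_esingle, ha, ip_esingle_esingle, X.symm l k, hCa,
        ip_esingle_esingle, X.symm l' k, hCb]
      ring
    have hb3 : b.1 = esingle l + esingle l' + esingle k := eq_add3_of_norm_zero hzero
    have hce : c.1 = esingle k + esingle l' := by rw [hcv, hb3]; abel
    have hce' : c'.1 = esingle l' + esingle l := by rw [hcv', hb3]; abel
    have hA : T k c = rr ^ 5 - rr ^ 3 :=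
      IH k c _ (htN_lt_of_add1 hb) (Inst.r3 hCkl' hce)
    have hB : T l' c' = rr ^ 5 - rr ^ 3 :=
      IH l' c' _ (htN_lt_of_add1 hb') (Inst.r3 (by rw [ip_esingle_esingle, X.symm l' l, ha]) hce')
    rw [hA, hB]

lemma d55 (IH : IHyp T b) {l l' : Fin n} {c d c' d' : ADE.PosIdx' X}
    (hc0 : X.ip (esingle k) b.1 = 0)
    (hipl : X.ip (esingle l) b.1 = 1) (hCkl : X.ip (esingle k) (esingle l) = -1)
    (hb1 : b.1 = c.1 + esingle k + esingle l) (hb2 : b.1 = d.1 + esingle l)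
    (hipl' : X.ip (esingle l') b.1 = 1) (hCkl' : X.ip (esingle k) (esingle l') = -1)
    (hb1' : b.1 = c'.1 + esingle k + esingle l') (hb2' : b.1 = d'.1 + esingle l') :
    T l c + (rr - ri) * T k d = T l' c' + (rr - ri) * T k d' := by
  rcases eq_or_ne l l' with rfl | hll'
  · rw [posIdx_ext (X := X) (c := c) (c' := c') (by rw [veq_sub2 hb1, veq_sub2 hb1']),
      posIdx_ext (X := X) (c := d) (c' := d') (by rw [veq_sub hb2, veq_sub hb2'])]
  · have hCa : X.C k l = -1 := by rw [← ip_esingle_esingle (X := X)]; exact hCkl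
    have hCb : X.C k l' = -1 := by rw [← ip_esingle_esingle (X := X)]; exact hCkl'
    have hkl : k ≠ l := fun h => by rw [h, X.diag] at hCa; omega
    have hkl' : k ≠ l' := fun h => by rw [h, X.diag] at hCb; omega
    have ha : X.C l l' = 0 := by
      rcases X.offdiag l l' hll' with h0 | h0
      · exact h0
      · exfalso
        have hz := ip_nonneg (X := X) (b.1 - esingle l - esingle l' - esingle k)
        rw [norm_sub3, pos_norm b.2, ip_self_esingle, ip_self_esingle, ip_self_esingle,
          hipl, hipl', hc0, ip_esingle_esingle, h0, ip_esingle_esingle, X.symm l k, hCa,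
          ip_esingle_esingle, X.symm l' k, hCb] at hz
        omega
    have hzero : X.ip (b.1 - esingle l - esingle l' - esingle k)
        (b.1 - esingle l - esingle l' - esingle k) = 0 := by
      rw [norm_sub3, pos_norm b.2, ip_self_esingle, ip_self_esingle, ip_self_esingle,
        hipl, hipl', hc0, ip_esingle_esingle, ha, ip_esingle_esingle, X.symm l k, hCa,
        ip_esingle_esingle, X.symm l' k, hCb]
      ring
    have hb3 : b.1 = esingle l + esingle l' + esingle k := eq_add3_of_norm_zero hzero
    have hce : c.1 = esingle l' := by rw [veq_sub2 hb1, hb3]; abel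
    have hce' : c'.1 = esingle l := by rw [veq_sub2 hb1', hb3]; abel
    have hde : d.1 = esingle k + esingle l' := by rw [veq_sub hb2, hb3]; abel
    have hde' : d'.1 = esingle k + esingle l := by rw [veq_sub hb2', hb3]; abel
    have h1 : T l c = 0 := IH l c 0 (htN_lt_of_add2 hb1) (Inst.r1 hll' hce)
    have h1' : T l' c' = 0 := IH l' c' 0 (htN_lt_of_add2 hb1')
      (Inst.r1 (Ne.symm hll') hce')
    have h2 : T k d = rr ^ 5 - rr ^ 3 :=
      IH k d _ (htN_lt_of_add1 hb2) (Inst.r3 hCkl' hde)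
    have h2' : T k d' = rr ^ 5 - rr ^ 3 :=
      IH k d' _ (htN_lt_of_add1 hb2') (Inst.r3 hCkl hde')
    rw [h1, h1', h2, h2']


lemma d66 (IH : IHyp T b) {l l' : Fin n} {c d c' d' : ADE.PosIdx' X}
    (hcm : X.ip (esingle k) b.1 = -1)
    (hipl : X.ip (esingle l) b.1 = 1) (hCkl : X.ip (esingle k) (esingle l) = -1)
    (hb1 : b.1 = c.1 + esingle l) (hb2 : b.1 = d.1 + esingle l)
    (hipl' : X.ip (esingle l') b.1 = 1) (hCkl' : X.ip (esingle k) (esingle l') = -1)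
    (hb1' : b.1 = c'.1 + esingle l') (hb2' : b.1 = d'.1 + esingle l') :
    ri * T l c + (rr - ri) * T k d = ri * T l' c' + (rr - ri) * T k d' := by
  rcases eq_or_ne l l' with rfl | hll'
  · rw [posIdx_ext (X := X) (c := c) (c' := c') (by rw [veq_sub hb1, veq_sub hb1']),
      posIdx_ext (X := X) (c := d) (c' := d') (by rw [veq_sub hb2, veq_sub hb2'])]
  · have hdc : d = c := posIdx_ext (by rw [veq_sub hb2, veq_sub hb1])
    have hdc' : d' = c' := posIdx_ext (by rw [veq_sub hb2', veq_sub hb1'])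
    rw [hdc, hdc']
    have hCa : X.C k l = -1 := by rw [← ip_esingle_esingle (X := X)]; exact hCkl
    have hCb : X.C k l' = -1 := by rw [← ip_esingle_esingle (X := X)]; exact hCkl'
    have hkl : k ≠ l := fun h => by rw [h, X.diag] at hCa; omega
    have hkl' : k ≠ l' := fun h => by rw [h, X.diag] at hCb; omega
    have hcv : c.1 = b.1 - esingle l := veq_sub hb1
    have hcv' : c'.1 = b.1 - esingle l' := veq_sub hb1'
    have hbl : 1 ≤ b.1 l := coord_pos_of_ip_one b.2 (by omega)
    have hbl' : 1 ≤ b.1 l' := coord_pos_of_ip_one b.2 (by omega)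
    have hbk : 1 ≤ b.1 k := coord_pos_two_nbr b.2 (Ne.symm hkl) (Ne.symm hkl') hll'
      hCa hCb hbl hbl' (by omega)
    have ha : X.C l l' = 0 := by
      rcases X.offdiag l l' hll' with h0 | h0
      · exact h0
      · exfalso
        have hc2 : X.ip (esingle l') c.1 = 2 := by
          rw [hcv, ip_e_sub1, hipl', X.symm l' l, h0]; ring
        have hcel : c.1 = esingle l' := (eq_of_ip_eq_two (esingle_mem l') c.2 hc2).symm
        have hbeq : b.1 = esingle l' + esingle l := by rw [hb1, hcel]
        rw [hbeq, ip_add_right, hCkl', hCkl] at hcm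
        omega
    have hw : b.1 - esingle l - esingle l' ∈ X.Pos := by
      apply memPos_of (sub2_nonneg b.2.2.1 hll' hbl hbl')
      rw [norm_sub2, pos_norm b.2, ip_self_esingle, ip_self_esingle, hipl, hipl',
        ip_esingle_esingle, ha]
      ring
    have hv : b.1 - esingle l - esingle l' - esingle k ∈ X.Pos := by
      apply memPos_of (sub3_nonneg b.2.2.1 hll' (Ne.symm hkl) (Ne.symm hkl') hbl hbl' hbk)
      rw [norm_sub3, pos_norm b.2, ip_self_esingle, ip_self_esingle, ip_self_esingle,
        hipl, hipl', hcm, ip_esingle_esingle, ha, ip_esingle_esingle, X.symm l k, hCa,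
        ip_esingle_esingle, X.symm l' k, hCb]
      ring
    have hwv : (b.1 - esingle l - esingle l') = (b.1 - esingle l - esingle l' - esingle k) + esingle k := by abel
    have hwlt : htN (b.1 - esingle l - esingle l') < htN b.1 :=
      htN_lt_of_add2 (b := b) (c := ⟨_, hw⟩)
        (k := l) (l := l') (by simp only; abel)
    -- expand T k c via rule 5 with pivot l'
    have hA : T k c = T l' ⟨_, hv⟩ + (rr - ri) * T k ⟨_, hw⟩ := by
      apply IH k c _ (htN_lt_of_add1 hb1)
      apply Inst.r5 (l := l')
      · rw [hcv, ip_e_sub1, hcm, hCa]; ring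
      · rw [hcv, ip_e_sub1, hipl', X.symm l' l, ha]; ring
      · exact hCkl'
      · rw [hcv]; dsimp only; abel
      · rw [hcv]; dsimp only; abel
    have hA' : T k c' = T l ⟨_, hv⟩ + (rr - ri) * T k ⟨_, hw⟩ := by
      apply IH k c' _ (htN_lt_of_add1 hb1')
      apply Inst.r5 (l := l)
      · rw [hcv', ip_e_sub1, hcm, hCb]; ring
      · rw [hcv', ip_e_sub1, hipl, ha]; ring
      · exact hCkl
      · rw [hcv']; dsimp only; abel
      · rw [hcv']; dsimp only; abel
    -- expand T l c via rule 4 with pivot l'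
    have hB : T l c = rr * T l ⟨_, hw⟩ := by
      apply IH l c _ (htN_lt_of_add1 hb1)
      apply Inst.r4 (l := l')
      · rw [hcv, ip_e_sub1, hipl', X.symm l' l, ha]; ring
      · rw [ip_esingle_esingle, ha]
      · rw [hcv]; dsimp only; abel
    have hB' : T l' c' = rr * T l' ⟨_, hw⟩ := by
      apply IH l' c' _ (htN_lt_of_add1 hb1')
      apply Inst.r4 (l := l)
      · rw [hcv', ip_e_sub1, hipl, ha]; ring
      · rw [ip_esingle_esingle, X.symm l' l, ha]
      · rw [hcv']; dsimp only; abel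
    -- expand T l w via rule 6 with pivot k
    have hC : T l ⟨_, hw⟩ = ri * T k ⟨_, hv⟩ + (rr - ri) * T l ⟨_, hv⟩ := by
      apply IH l ⟨_, hw⟩ _ hwlt
      apply Inst.r6 (l := k)
      · simp only
        rw [ip_e_sub2, hipl, X.diag, ha]; ring
      · simp only
        rw [ip_e_sub2, hcm, hCa, hCb]; ring
      · rw [ip_esingle_esingle, X.symm l k, hCa]
      · exact hwv
      · exact hwv
    have hC' : T l' ⟨_, hw⟩ = ri * T k ⟨_, hv⟩ + (rr - ri) * T l' ⟨_, hv⟩ := by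
      apply IH l' ⟨_, hw⟩ _ hwlt
      apply Inst.r6 (l := k)
      · simp only
        rw [ip_e_sub2, hipl', X.symm l' l, ha, X.diag]; ring
      · simp only
        rw [ip_e_sub2, hcm, hCa, hCb]; ring
      · rw [ip_esingle_esingle, X.symm l' k, hCb]
      · exact hwv
      · exact hwv
    rw [hA, hA', hB, hB', hC, hC']
    have hri : (rr : L) * ri = 1 := rr_mul_ri
    linear_combination ((rr - ri) * T l ⟨_, hv⟩ - (rr - ri) * T l' ⟨_, hv⟩) * hri

lemma norm_add3 (x y z : Fin n → ℤ) :
    X.ip (x + y + z) (x + y + z)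
      = X.ip x x + X.ip y y + X.ip z z + 2 * X.ip x y + 2 * X.ip x z + 2 * X.ip y z := by
  simp only [ip_add_left, ip_add_right]
  rw [ip_symm y x, ip_symm z x, ip_symm z y]; ring

lemma d77 (IH : IHyp T b) {l l' : Fin n} {c c' : ADE.PosIdx' X}
    (hc1 : X.ip (esingle k) b.1 = 1)
    (hipl : X.ip (esingle l) b.1 = 0) (hCkl : X.ip (esingle k) (esingle l) = -1)
    (hb : b.1 = c.1 + esingle k)
    (hipl' : X.ip (esingle l') b.1 = 0) (hCkl' : X.ip (esingle k) (esingle l') = -1)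
    (hb' : b.1 = c'.1 + esingle k) :
    rr * T l c = rr * T l' c' := by
  have hcc : c = c' := posIdx_ext (by rw [veq_sub hb, veq_sub hb'])
  rw [hcc]
  rcases eq_or_ne l l' with rfl | hll'
  · rfl
  · have hCa : X.C k l = -1 := by rw [← ip_esingle_esingle (X := X)]; exact hCkl
    have hCb : X.C k l' = -1 := by rw [← ip_esingle_esingle (X := X)]; exact hCkl'
    have hkl : k ≠ l := fun h => by rw [h, X.diag] at hCa; omega
    have hkl' : k ≠ l' := fun h => by rw [h, X.diag] at hCb; omega
    have hcv : c'.1 = b.1 - esingle k := veq_sub hb'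
    have hbk : 1 ≤ b.1 k := coord_pos_of_ip_one b.2 (by omega)
    have hbl : 1 ≤ b.1 l := coord_pos_one_nbr b.2 hkl
      (by rw [X.symm l k]; exact hCa) hbk (by omega)
    have hbl' : 1 ≤ b.1 l' := coord_pos_one_nbr b.2 hkl'
      (by rw [X.symm l' k]; exact hCb) hbk (by omega)
    have ha : X.C l l' = 0 := by
      rcases X.offdiag l l' hll' with h0 | h0
      · exact h0
      · exfalso
        have h9 : X.ip (esingle k + esingle l + esingle l')
            (esingle k + esingle l + esingle l') = 0 := by
          rw [norm_add3, ip_self_esingle, ip_self_esingle, ip_self_esingle,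
            hCkl, hCkl', ip_esingle_esingle, h0]
          ring
        have h10 := ip_self_eq_zero h9
        have h11 := congrFun h10 k
        rw [Pi.add_apply, Pi.add_apply, Pi.zero_apply, esingle_self,
          esingle_ne (Ne.symm hkl), esingle_ne (Ne.symm hkl')] at h11
        omega
    -- generic case: go down to b - e k - e l' - e l
    have hu : b.1 - esingle k - esingle l' ∈ X.Pos := by
      apply memPos_of (sub2_nonneg b.2.2.1 hkl' hbk hbl')
      rw [norm_sub2, pos_norm b.2, ip_self_esingle, ip_self_esingle, hc1, hipl', hCkl']
      ring
    have hs : b.1 - esingle k - esingle l' - esingle l ∈ X.Pos := by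
      apply memPos_of (sub3_nonneg b.2.2.1 hkl' hkl (Ne.symm hll') hbk hbl' hbl)
      rw [norm_sub3, pos_norm b.2, ip_self_esingle, ip_self_esingle, ip_self_esingle,
        hc1, hipl', hipl, hCkl', hCkl, ip_esingle_esingle, X.symm l' l, ha]
      ring
    have hult : htN (b.1 - esingle k - esingle l') < htN b.1 :=
      htN_lt_of_add2 (b := b) (c := ⟨_, hu⟩) (k := k) (l := l') (by simp only; abel)
    have huv : b.1 - esingle k - esingle l'
        = (b.1 - esingle k - esingle l' - esingle l) + esingle l := by abel
    have hA : T l c' = rr * T l ⟨_, hu⟩ := by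
      apply IH l c' _ (htN_lt_of_add1 hb')
      apply Inst.r4 (l := l')
      · rw [hcv, ip_e_sub1, hipl', X.symm l' k, hCb]; ring
      · rw [ip_esingle_esingle, ha]
      · rw [hcv]; dsimp only; abel
    have hB : T l ⟨_, hu⟩ = rr * T k ⟨_, hs⟩ := by
      apply IH l ⟨_, hu⟩ _ hult
      apply Inst.r7 (l := k)
      · simp only
        rw [ip_e_sub2, hipl, X.symm l k, hCa, ha]; ring
      · simp only
        rw [ip_e_sub2, hc1, X.diag, hCb]; ring
      · rw [ip_esingle_esingle, X.symm l k, hCa]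
      · exact huv
    -- and symmetrically for l'
    have hu2 : b.1 - esingle k - esingle l ∈ X.Pos := by
      apply memPos_of (sub2_nonneg b.2.2.1 hkl hbk hbl)
      rw [norm_sub2, pos_norm b.2, ip_self_esingle, ip_self_esingle, hc1, hipl, hCkl]
      ring
    have hu2lt : htN (b.1 - esingle k - esingle l) < htN b.1 :=
      htN_lt_of_add2 (b := b) (c := ⟨_, hu2⟩) (k := k) (l := l) (by simp only; abel)
    have hu2v : b.1 - esingle k - esingle l
        = (b.1 - esingle k - esingle l' - esingle l) + esingle l' := by abel
    have hA' : T l' c' = rr * T l' ⟨_, hu2⟩ := by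
      apply IH l' c' _ (htN_lt_of_add1 hb')
      apply Inst.r4 (l := l)
      · rw [hcv, ip_e_sub1, hipl, X.symm l k, hCa]; ring
      · rw [ip_esingle_esingle, X.symm l' l, ha]
      · rw [hcv]; dsimp only; abel
    have hB' : T l' ⟨_, hu2⟩ = rr * T k ⟨_, hs⟩ := by
      apply IH l' ⟨_, hu2⟩ _ hu2lt
      apply Inst.r7 (l := k)
      · simp only
        rw [ip_e_sub2, hipl', X.symm l' k, hCb, X.symm l' l, ha]; ring
      · simp only
        rw [ip_e_sub2, hc1, X.diag, hCa]; ring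
      · rw [ip_esingle_esingle, X.symm l' k, hCb]
      · simp only
        rw [hu2v]
    rw [hA, hA', hB, hB']


lemma c14 {b c : ADE.PosIdx' X} {m l : Fin n} (h1 : b.1 = esingle m)
    (h2 : b.1 = c.1 + esingle l) : False := by
  have a1 : htZ b.1 = 1 := by rw [h1, htZ_esingle]
  have a2 := htZ_ge2 h2
  omega

lemma c15 {b c : ADE.PosIdx' X} {m k' l : Fin n} (h1 : b.1 = esingle m)
    (h2 : b.1 = c.1 + esingle k' + esingle l) : False := by
  have a1 : htZ b.1 = 1 := by rw [h1, htZ_esingle]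
  have a2 := htZ_ge3 h2
  omega

lemma c13 {b : ADE.PosIdx' X} {m k' l : Fin n} (h1 : b.1 = esingle m)
    (h2 : b.1 = esingle k' + esingle l) : False := by
  have a1 : htZ b.1 = 1 := by rw [h1, htZ_esingle]
  have a2 : htZ b.1 = 2 := by rw [h2, htZ_add, htZ_esingle, htZ_esingle]; norm_num
  omega

lemma c35 {b c : ADE.PosIdx' X} {m k' l l' : Fin n} (h1 : b.1 = esingle m + esingle l')
    (h2 : b.1 = c.1 + esingle k' + esingle l) : False := by
  have a1 : htZ b.1 = 2 := by rw [h1, htZ_add, htZ_esingle, htZ_esingle]; norm_num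
  have a2 := htZ_ge3 h2
  omega

lemma s34 {b : ADE.PosIdx' X} {k l m : Fin n}
    (hC3 : X.ip (esingle k) (esingle l) = -1) (hb3 : b.1 = esingle k + esingle l)
    (hip4 : X.ip (esingle m) b.1 = 1) (hC4 : X.ip (esingle k) (esingle m) = 0) : False := by
  have hCa : X.C k l = -1 := by rw [← ip_esingle_esingle (X := X)]; exact hC3
  have hCb : X.C k m = 0 := by rw [← ip_esingle_esingle (X := X)]; exact hC4
  have hmk : m ≠ k := fun h => by rw [h, X.diag] at hCb; omega
  rw [hb3, ip_add_right, ip_esingle_esingle, ip_esingle_esingle] at hip4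
  have h1 : X.C m k = 0 := by rw [X.symm m k]; exact hCb
  rcases eq_or_ne m l with rfl | hml
  · rw [X.diag] at hip4; omega
  · rcases X.offdiag m l hml with h2 | h2 <;> omega

lemma s37 {b : ADE.PosIdx' X} {k l m : Fin n}
    (hC3 : X.ip (esingle k) (esingle l) = -1) (hb3 : b.1 = esingle k + esingle l)
    (hip7 : X.ip (esingle m) b.1 = 0) (hC7 : X.ip (esingle k) (esingle m) = -1) : False := by
  have hCa : X.C k l = -1 := by rw [← ip_esingle_esingle (X := X)]; exact hC3
  have hCb : X.C k m = -1 := by rw [← ip_esingle_esingle (X := X)]; exact hC7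
  have hmk : m ≠ k := fun h => by rw [h, X.diag] at hCb; omega
  rw [hb3, ip_add_right, ip_esingle_esingle, ip_esingle_esingle] at hip7
  have h1 : X.C m k = -1 := by rw [X.symm m k]; exact hCb
  rcases eq_or_ne m l with rfl | hml
  · rw [X.diag] at hip7; omega
  · rcases X.offdiag m l hml with h2 | h2 <;> omega

set_option maxHeartbeats 2000000 in
/-- Any two rule instances with the same left-hand side have equal right-hand
sides, given that all relations hold at lower heights. -/
lemma inst_unique (IH : IHyp T b) {v v' : L} (h : Inst T k b v) (h' : Inst T k b v') :
    v = v' := by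
  rcases h.elim' with ⟨l1, hkl1, hb1, rfl⟩ | ⟨hb1, rfl⟩ | ⟨l1, hC1, hb1, rfl⟩ |
    ⟨l1, c1, hip1, hC1, hb1, rfl⟩ | ⟨l1, c1, d1, hx1, hy1, hz1, hu1, hw1, rfl⟩ |
    ⟨l1, c1, d1, hx1, hy1, hz1, hu1, hw1, rfl⟩ | ⟨l1, c1, hx1, hy1, hz1, hu1, rfl⟩ <;>
  rcases h'.elim' with ⟨l2, hkl2, hb2, rfl⟩ | ⟨hb2, rfl⟩ | ⟨l2, hC2, hb2, rfl⟩ |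
    ⟨l2, c2, hip2, hC2, hb2, rfl⟩ | ⟨l2, c2, d2, hx2, hy2, hz2, hu2, hw2, rfl⟩ |
    ⟨l2, c2, d2, hx2, hy2, hz2, hu2, hw2, rfl⟩ | ⟨l2, c2, hx2, hy2, hz2, hu2, rfl⟩
  -- row 1 : b fundamental, k ≠ l1
  · rfl
  · exact absurd (esingle_inj (hb1.symm.trans hb2)).symm hkl1
  · exact (c13 hb1 hb2).elim
  · exact (c14 hb1 hb2).elim
  · exact (c15 hb1 hu2).elim
  · exact (c14 hb1 hu2).elim
  · exact (c14 hb1 hu2).elim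
  -- row 2 : b = e k
  · exact absurd (esingle_inj (hb2.symm.trans hb1)).symm hkl2
  · rfl
  · exact (c13 hb1 hb2).elim
  · exact (c14 hb1 hb2).elim
  · exact (c15 hb1 hu2).elim
  · exact (c14 hb1 hu2).elim
  · exact (c14 hb1 hu2).elim
  -- row 3 : b = e k + e l1
  · exact (c13 hb2 hb1).elim
  · exact (c13 hb2 hb1).elim
  · rfl
  · exact (s34 hC1 hb1 hip2 hC2).elim
  · exact (c35 hb1 hu2).elim
  · exfalso; rw [hb1, ip_add_right, ip_self_esingle, hC1] at hx2; omega
  · exact (s37 hC1 hb1 hy2 hz2).elim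
  -- row 4 : rule 4 with pivot l1
  · exact (c14 hb2 hb1).elim
  · exact (c14 hb2 hb1).elim
  · exact (s34 hC2 hb2 hip1 hC1).elim
  · exact d44 IH hip1 hC1 hb1 hip2 hC2 hb2
  · exact d45 IH hip1 hC1 hb1 hx2 hy2 hz2 hu2 hw2
  · exact d46 IH hip1 hC1 hb1 hx2 hy2 hz2 hu2 hw2
  · exact d47 IH hip1 hC1 hb1 hx2 hy2 hz2 hu2
  -- row 5 : rule 5 with pivot l1
  · exact (c15 hb2 hu1).elim
  · exact (c15 hb2 hu1).elim
  · exact (c35 hb2 hu1).elim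
  · exact (d45 IH hip2 hC2 hb2 hx1 hy1 hz1 hu1 hw1).symm
  · exact d55 IH hx1 hy1 hz1 hu1 hw1 hy2 hz2 hu2 hw2
  · exfalso; rw [hx1] at hx2; omega
  · exfalso; rw [hx1] at hx2; omega
  -- row 6 : rule 6 with pivot l1
  · exact (c14 hb2 hu1).elim
  · exact (c14 hb2 hu1).elim
  · exfalso; rw [hb2, ip_add_right, ip_self_esingle, hC2] at hx1; omega
  · exact (d46 IH hip2 hC2 hb2 hx1 hy1 hz1 hu1 hw1).symm
  · exfalso; rw [hx2] at hx1; omega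
  · exact d66 IH hx1 hy1 hz1 hu1 hw1 hy2 hz2 hu2 hw2
  · exfalso; rw [hx1] at hx2; omega
  -- row 7 : rule 7 with pivot l1
  · exact (c14 hb2 hu1).elim
  · exact (c14 hb2 hu1).elim
  · exact (s37 hC2 hb2 hy1 hz1).elim
  · exact (d47 IH hip2 hC2 hb2 hx1 hy1 hz1 hu1).symm
  · exfalso; rw [hx2] at hx1; omega
  · exfalso; rw [hx2] at hx1; omega
  · exact d77 IH hx1 hy1 hz1 hu1 hy2 hz2 hu2


end Diamond

end LK
namespace LK

open ADE

variable {n : ℕ} {X : ADE n}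

lemma relsUpTo_mono {h h' : ℕ} (hle : h' ≤ h) {T : Fin n → ADE.PosIdx' X → L}
    (hT : RelsUpTo h T) : RelsUpTo h' T :=
  fun k b v hb hi => hT k b v (le_trans hb hle) hi

lemma ext_step {h : ℕ} {T : Fin n → ADE.PosIdx' X → L} (hT : RelsUpTo h T) :
    ∃ T' : Fin n → ADE.PosIdx' X → L, RelsUpTo (h + 1) T' := by
  classical
  refine ⟨fun k b => if htN b.1 ≤ h then T k b else
    Classical.choose (exists_inst T k b), ?_⟩
  intro k b v hb hInst
  have hag : ∀ (k' : Fin n) (c : ADE.PosIdx' X), htN c.1 < htN b.1 →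
      (fun k b => if htN b.1 ≤ h then T k b else
        Classical.choose (exists_inst T k b)) k' c = T k' c := by
    intro k' c hlt
    have : htN c.1 ≤ h := by omega
    simp only [if_pos this]
  have hI : Inst T k b v := Inst_congr hag hInst
  by_cases hcase : htN b.1 ≤ h
  · simp only [if_pos hcase]
    exact hT k b v hcase hI
  · simp only [if_neg hcase]
    have hIH : IHyp T b := by
      intro k' c v' hlt hi
      exact hT k' c v' (by omega) hi
    exact inst_unique hIH (Classical.choose_spec (exists_inst T k b)) hI

lemma exists_relsUpTo (h : ℕ) : ∃ T : Fin n → ADE.PosIdx' X → L, RelsUpTo h T := by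
  induction h with
  | zero =>
      refine ⟨fun _ _ => 0, ?_⟩
      intro k b v hb _
      have := htN_pos (X := X) b.2
      omega
  | succ h ih =>
      obtain ⟨T, hT⟩ := ih
      exact ext_step hT

lemma agree {h : ℕ} {T T' : Fin n → ADE.PosIdx' X → L}
    (hT : RelsUpTo h T) (hT' : RelsUpTo h T') :
    ∀ k (b : ADE.PosIdx' X), htN b.1 ≤ h → T k b = T' k b := by
  suffices H : ∀ N k (b : ADE.PosIdx' X), htN b.1 = N → htN b.1 ≤ h → T k b = T' k b by
    intro k b hb; exact H (htN b.1) k b rfl hb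
  intro N
  induction N using Nat.strong_induction_on with
  | _ N IH =>
    intro k b hN hb
    obtain ⟨v, hv⟩ := exists_inst T k b
    have h1 : T k b = v := hT k b v hb hv
    have hI' : Inst T' k b v := Inst_congr
      (fun k' c hlt => IH (htN c.1) (by omega) k' c rfl (by omega)) hv
    have h2 : T' k b = v := hT' k b v hb hI'
    rw [h1, h2]

/-- the global solution -/
noncomputable def Tsol (X : ADE n) : Fin n → ADE.PosIdx' X → L :=
  fun k b => (exists_relsUpTo (X := X) (htN b.1)).choose k b

lemma Tsol_inst : ∀ (k : Fin n) (b : ADE.PosIdx' X) v, Inst (Tsol X) k b v →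
    Tsol X k b = v := by
  intro k b v hv
  have hF : ∀ h : ℕ, RelsUpTo h ((exists_relsUpTo (X := X) h).choose) :=
    fun h => (exists_relsUpTo h).choose_spec
  have hag : ∀ (k' : Fin n) (c : ADE.PosIdx' X), htN c.1 < htN b.1 →
      Tsol X k' c = (exists_relsUpTo (X := X) (htN b.1)).choose k' c := by
    intro k' c hlt
    exact agree (hF (htN c.1)) (relsUpTo_mono (by omega) (hF (htN b.1)))
      k' c le_rfl
  have hI : Inst ((exists_relsUpTo (X := X) (htN b.1)).choose) k b v := Inst_congr hag hv
  exact hF (htN b.1) k b v le_rfl hI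

lemma tableRels_relsUpTo {T : Fin n → ADE.PosIdx' X → L}
    (h : ∀ k b v, Inst T k b v → T k b = v) (m : ℕ) : RelsUpTo m T :=
  fun k b v _ hi => h k b v hi

end LK

open LaurentPolynomial in
/-- The system of Lawrence–Krammer equations (Table 1) for the polynomials
`T_{k,β} ∈ ℤ[r^{±1}]` (`k ∈ {1,…,n}`, `β ∈ Φ⁺`) has a unique solution. -/
theorem table_existsUnique {n : ℕ} (X : ADE n) :
    ∃! Tf : Fin n → ADE.PosIdx' X → LaurentPolynomial ℤ,
      ADE.TableRels X (LaurentPolynomial ℤ) (T 1) (T (-1)) Tf := by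
  refine ⟨LK.Tsol X, ?_, ?_⟩
  · exact (LK.tableRels_iff (LK.Tsol X)).mpr LK.Tsol_inst
  · intro Tf hTf
    have h1 : ∀ k b v, LK.Inst Tf k b v → Tf k b = v := (LK.tableRels_iff Tf).mp hTf
    funext k b
    exact LK.agree (LK.tableRels_relsUpTo h1 (LK.htN b.1))
      (LK.tableRels_relsUpTo (LK.Tsol_inst) (LK.htN b.1)) k b le_rfl
end

section
/- For A_n: setting T_{k,β} = r^{ht(β)+1}(r²−1)·c where c = 1 if (α_k,β) = 1, c = 1 − r^{−2} if (α_k,β) = 0 and k ∈ Supp(β), c = 0 if k ∉ Supp(β) (with T_{k,α_k} = r⁴), satisfies all the Lawrence–Krammer equations of Table 1 for the root system of type A_n. -/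
namespace LKAux
open ADE
variable {n : ℕ} (X : ADE n)

lemma esingle_self (k : Fin n) : esingle k k = 1 := Pi.single_eq_same k 1
lemma esingle_ne {k j : Fin n} (h : j ≠ k) : esingle k j = 0 := Pi.single_eq_of_ne h 1

lemma ip_sl (k : Fin n) (w : Fin n → ℤ) : X.ip (esingle k) w = ∑ j, X.C k j * w j := by
  simp only [ADE.ip, esingle]
  rw [Finset.sum_eq_single k]
  · simp
  · intro i _ hik
    simp [Pi.single_eq_of_ne hik]
  · intro h; exact absurd (Finset.mem_univ k) h

lemma ip_ss (k l : Fin n) : X.ip (esingle k) (esingle l) = X.C k l := by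
  rw [ip_sl]
  rw [Finset.sum_eq_single l]
  · simp [esingle_self]
  · intro j _ hjl; simp [esingle_ne hjl]
  · intro h; exact absurd (Finset.mem_univ l) h

lemma ip_add_right (v w u : Fin n → ℤ) : X.ip v (w + u) = X.ip v w + X.ip v u := by
  simp [ADE.ip, mul_add, Finset.sum_add_distrib]

lemma ip_sub_right (v w u : Fin n → ℤ) : X.ip v (w - u) = X.ip v w - X.ip v u := by
  simp [ADE.ip, mul_sub, Finset.sum_sub_distrib]

lemma ip_sub_left (v w u : Fin n → ℤ) : X.ip (v - u) w = X.ip v w - X.ip u w := by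
  simp [ADE.ip, sub_mul, Finset.sum_sub_distrib]

lemma ip_symm (v w : Fin n → ℤ) : X.ip v w = X.ip w v := by
  simp only [ADE.ip]
  rw [Finset.sum_comm]
  refine Finset.sum_congr rfl fun i _ => Finset.sum_congr rfl fun j _ => ?_
  rw [X.symm]; ring

lemma q_sub (v w : Fin n → ℤ) :
    X.ip (v - w) (v - w) = X.ip v v - X.ip v w - X.ip w v + X.ip w w := by
  rw [ip_sub_left, ip_sub_right, ip_sub_right]; ring

lemma q_nonneg (v : Fin n → ℤ) : 0 ≤ X.ip v v := by
  rcases eq_or_ne v 0 with rfl | h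
  · simp [ADE.ip]
  · exact (X.posdef v h).le

lemma q_expand (hβ : β ∈ X.Pos) (k : Fin n) :
    X.ip (β - esingle k) (β - esingle k) = 4 - 2 * X.ip (esingle k) β := by
  rw [q_sub, hβ.2.2, ip_symm X β (esingle k), ip_ss, X.diag]; ring

lemma ip_single_le_two {β : Fin n → ℤ} (hβ : β ∈ X.Pos) (k : Fin n) :
    X.ip (esingle k) β ≤ 2 := by
  have h0 := q_nonneg X (β - esingle k)
  rw [q_expand X hβ] at h0
  linarith

lemma eq_single_of_ip_eq_two {β : Fin n → ℤ} (hβ : β ∈ X.Pos) {k : Fin n}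
    (h : X.ip (esingle k) β = 2) : β = esingle k := by
  by_contra hne
  have h2 : (0:ℤ) < X.ip (β - esingle k) (β - esingle k) :=
    X.posdef _ (sub_ne_zero.mpr hne)
  rw [q_expand X hβ, h] at h2
  omega

variable (hC : ∀ i j : Fin n, X.C i j =
      if i = j then 2 else if (i : ℕ) + 1 = (j : ℕ) ∨ (j : ℕ) + 1 = (i : ℕ) then -1 else 0)

lemma htZ_add (u v : Fin n → ℤ) : ADE.htZ (u + v) = ADE.htZ u + ADE.htZ v := by
  simp [ADE.htZ, Finset.sum_add_distrib]

lemma htZ_esingle (k : Fin n) : ADE.htZ (esingle k) = 1 := by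
  rw [ADE.htZ, Finset.sum_eq_single k]
  · exact esingle_self k
  · intro j _ hjk; exact esingle_ne hjk
  · intro h; exact absurd (Finset.mem_univ k) h

include hC

lemma ip_le_two_mul {β : Fin n → ℤ} (h0 : ∀ j, 0 ≤ β j) (k : Fin n) :
    X.ip (esingle k) β ≤ 2 * β k := by
  rw [ip_sl, ← Finset.add_sum_erase _ _ (Finset.mem_univ k), X.diag]
  have h : ∑ j ∈ Finset.univ.erase k, X.C k j * β j ≤ 0 := by
    refine Finset.sum_nonpos fun j hj => ?_
    have hjk : j ≠ k := Finset.ne_of_mem_erase hj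
    rcases X.offdiag k j (Ne.symm hjk) with h | h <;> rw [h]
    · simp
    · linarith [h0 j]
  linarith

lemma ip_ge {β : Fin n → ℤ} (h0 : ∀ j, 0 ≤ β j) (h1 : ∀ j, β j ≤ 1) (k : Fin n) :
    2 * β k - 2 ≤ X.ip (esingle k) β := by
  rw [ip_sl, ← Finset.add_sum_erase _ _ (Finset.mem_univ k), X.diag]
  set P : Fin n → Prop := fun j => (k : ℕ) + 1 = (j : ℕ) ∨ (j : ℕ) + 1 = (k : ℕ) with hP
  have hb : ∀ j ∈ Finset.univ.erase k,
      (if P j then (-1 : ℤ) else 0) ≤ X.C k j * β j := by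
    intro j hj
    have hjk : j ≠ k := Finset.ne_of_mem_erase hj
    rw [hC k j, if_neg (Ne.symm hjk)]
    by_cases hadj : P j
    · rw [if_pos hadj]
      linarith [h1 j]
    · rw [if_neg hadj]
      simp
  have hsum := Finset.sum_le_sum hb
  have hcard : ((Finset.univ.erase k).filter P).card ≤ 2 := by
    have hle : ((Finset.univ.erase k).filter P).card
        ≤ ({(k : ℕ) + 1, (k : ℕ) - 1} : Finset ℕ).card := by
      apply Finset.card_le_card_of_injOn (fun j : Fin n => (j : ℕ))
      · intro a ha
        have h2 : P a := (Finset.mem_filter.mp ha).2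
        simp only [Finset.mem_coe, Finset.mem_insert, Finset.mem_singleton]
        rcases h2 with h | h
        · left; omega
        · right; omega
      · intro a _ b _ h
        exact Fin.val_injective h
    exact hle.trans ((Finset.card_insert_le _ _).trans (by simp))
  have hg : ∑ j ∈ Finset.univ.erase k, (if P j then (-1 : ℤ) else 0)
      = -(((Finset.univ.erase k).filter P).card : ℤ) := by
    rw [Finset.sum_ite, Finset.sum_const, Finset.sum_const_zero, add_zero]
    simp
  rw [hg] at hsum
  have : (-2 : ℤ) ≤ -(((Finset.univ.erase k).filter P).card : ℤ) := by
    have : (((Finset.univ.erase k).filter P).card : ℤ) ≤ 2 := by exact_mod_cast hcard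
    omega
  linarith

lemma le_one_aux : ∀ m : ℕ, ∀ β : Fin n → ℤ, β ∈ X.Pos → ADE.htZ β = (m : ℤ) → ∀ j, β j ≤ 1 := by
  intro m
  induction m using Nat.strong_induction_on with
  | _ m ih =>
    intro β hβ hm j
    obtain ⟨hne, h0, hq⟩ := hβ
    have hβ' : β ∈ X.Pos := ⟨hne, h0, hq⟩
    have hsum : ∑ k, β k * X.ip (esingle k) β = 2 := by
      rw [← hq]
      simp only [ip_sl]
      rw [ADE.ip]
      refine Finset.sum_congr rfl fun i _ => ?_
      rw [Finset.mul_sum]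
      exact Finset.sum_congr rfl fun j _ => by ring
    have hex : ∃ k, 0 < β k * X.ip (esingle k) β := by
      by_contra hno
      push_neg at hno
      have := Finset.sum_nonpos (s := Finset.univ) fun k _ => hno k
      linarith
    obtain ⟨k, hk⟩ := hex
    have hbk : 1 ≤ β k := by
      rcases eq_or_lt_of_le (h0 k) with h | h
      · rw [← h] at hk; simp at hk
      · omega
    have hsk : 1 ≤ X.ip (esingle k) β := by nlinarith
    have hsk2 := ip_single_le_two X hβ' k
    rcases (by omega : X.ip (esingle k) β = 2 ∨ X.ip (esingle k) β = 1) with h2 | h1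
    · rw [eq_single_of_ip_eq_two X hβ' h2]
      rcases eq_or_ne j k with rfl | hjk
      · rw [esingle_self]
      · rw [esingle_ne hjk]; omega
    · set γ := β - esingle k with hγ
      have hγq : X.ip γ γ = 2 := by rw [hγ, q_expand X hβ', h1]; ring
      have hγ0 : ∀ j', 0 ≤ γ j' := by
        intro j'
        rcases eq_or_ne j' k with rfl | hj'
        · simp only [hγ, Pi.sub_apply, esingle_self]; omega
        · simp only [hγ, Pi.sub_apply, esingle_ne hj']; linarith [h0 j']
      have hγne : γ ≠ 0 := by
        intro h; rw [h] at hγq; simp [ADE.ip] at hγq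
      have hγpos : γ ∈ X.Pos := ⟨hγne, hγ0, hγq⟩
      have hhγ : ADE.htZ γ = ADE.htZ β - 1 := by
        simp only [hγ, ADE.htZ, Pi.sub_apply, Finset.sum_sub_distrib]
        have : ∑ j, esingle k j = 1 := by
          rw [Finset.sum_eq_single k]
          · exact esingle_self k
          · intro j _ hjk; exact esingle_ne hjk
          · intro h; exact absurd (Finset.mem_univ k) h
        omega
      have hm1 : 1 ≤ m := by
        have : β k ≤ ADE.htZ β := Finset.single_le_sum (fun i _ => h0 i) (Finset.mem_univ k)
        omega
      have ihγ : ∀ j', γ j' ≤ 1 := by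
        refine ih (m - 1) (by omega) γ hγpos ?_
        rw [hhγ, hm]; omega
      rcases eq_or_ne j k with rfl | hjk
      · have hipγ : X.ip (esingle j) γ = -1 := by
          rw [hγ, ip_sub_right, h1, ip_ss, X.diag]; norm_num
        have := ip_ge X hC hγ0 ihγ j
        have hγj : γ j = β j - 1 := by simp [hγ, esingle_self]
        omega
      · have := ihγ j
        have : γ j = β j := by simp [hγ, esingle_ne hjk]
        omega

lemma le_one {β : Fin n → ℤ} (hβ : β ∈ X.Pos) (j : Fin n) : β j ≤ 1 := by
  have h0 : (0:ℤ) ≤ ADE.htZ β := Finset.sum_nonneg fun i _ => hβ.2.1 i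
  exact le_one_aux X hC (ADE.htZ β).toNat β hβ (Int.toNat_of_nonneg h0).symm j

lemma coord_eq_one {β : Fin n → ℤ} (hβ : β ∈ X.Pos) {k : Fin n}
    (h : X.ip (esingle k) β = 1) : β k = 1 := by
  have h2 := ip_le_two_mul X hC hβ.2.1 k
  have h3 := le_one X hC hβ k
  omega

lemma coord_eq_zero {β : Fin n → ℤ} (hβ : β ∈ X.Pos) {k : Fin n}
    (h : X.ip (esingle k) β = -1) : β k = 0 := by
  have h2 := ip_ge X hC hβ.2.1 (le_one X hC hβ) k
  have h3 := hβ.2.1 k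
  omega

end LKAux

open scoped Classical in
open LaurentPolynomial in
/-- The explicit Lawrence–Krammer coefficients for type `A_n`:
`T_{k,β} = r^{ht(β)+1}(r²-1)·c` with `c = 1` if `(α_k,β) = 1`,
`c = 1 - r^{-2}` if `(α_k,β) = 0` and `k ∈ Supp(β)`, `c = 0` if `k ∉ Supp(β)`,
and `T_{k,α_k} = r⁴`. -/
noncomputable def TAn {n : ℕ} (X : ADE n) : Fin n → ADE.PosIdx' X → LaurentPolynomial ℤ :=
  fun k b =>
    if b.1 = esingle k then T 4
    else if X.ip (esingle k) b.1 = 1 then T (ADE.htZ b.1 + 1) * (T 2 - 1)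
    else if X.ip (esingle k) b.1 = 0 ∧ b.1 k ≠ 0 then
      T (ADE.htZ b.1 + 1) * (T 2 - 1) * (1 - T (-2))
    else 0


open scoped Classical in
open LaurentPolynomial in
lemma TAn_of_ne {n : ℕ} (X : ADE n) (k : Fin n) (b : ADE.PosIdx' X) (h1 : b.1 ≠ esingle k) :
    TAn X k b =
      if X.ip (esingle k) b.1 = 1 then T (ADE.htZ b.1 + 1) * (T 2 - 1)
      else if X.ip (esingle k) b.1 = 0 ∧ b.1 k ≠ 0 then
        T (ADE.htZ b.1 + 1) * (T 2 - 1) * (1 - T (-2))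
      else 0 := by
  simp only [TAn]
  rw [if_neg h1]

open LaurentPolynomial in
lemma T_shift {h : ℤ} : (T (h + 1) : LaurentPolynomial ℤ) = T 1 * T h := by
  rw [← T_add]; congr 1; ring

open LaurentPolynomial in
/-- For the root system of type `A_n`, the explicit coefficients `TAn` satisfy all
the Lawrence–Krammer equations of Table 1. -/
theorem tAn_satisfies_table {n : ℕ} (X : ADE n)
    (hC : ∀ i j : Fin n, X.C i j =
      if i = j then 2 else if (i : ℕ) + 1 = (j : ℕ) ∨ (j : ℕ) + 1 = (i : ℕ) then -1 else 0) :
    ADE.TableRels X (LaurentPolynomial ℤ) (T 1) (T (-1)) (TAn X) := by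
  have hss : ∀ k l : Fin n, X.ip (esingle k) (esingle l) = X.C k l := LKAux.ip_ss X
  have hkne : ∀ k l : Fin n, X.ip (esingle k) (esingle l) = -1 → k ≠ l := by
    intro k l h hkl
    rw [hkl, hss, X.diag] at h; omega
  refine ⟨?_, ?_, ?_, ?_, ?_, ?_, ?_⟩
  · -- relation 1
    intro k l hkl b hb
    have hne : b.1 ≠ esingle k := by
      rw [hb]; intro h
      have h2 := congrFun h l
      rw [LKAux.esingle_self, LKAux.esingle_ne (Ne.symm hkl)] at h2
      exact absurd h2 (by norm_num)
    rw [TAn_of_ne X k b hne, hb]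
    have h1 : ¬ X.ip (esingle k) (esingle l) = 1 := by
      rw [hss]
      rcases X.offdiag k l hkl with h | h <;> omega
    rw [if_neg h1, if_neg]
    rintro ⟨-, h2⟩
    exact h2 (LKAux.esingle_ne hkl)
  · -- relation 2
    intro k b hb
    simp only [TAn]
    rw [if_pos hb, T_pow]
    norm_num
  · -- relation 3
    intro k l b hkl hb
    have hkl' : k ≠ l := hkne k l hkl
    have hne : b.1 ≠ esingle k := by
      rw [hb]; intro h
      have h2 := congrFun h l
      simp only [Pi.add_apply] at h2
      rw [LKAux.esingle_ne (Ne.symm hkl'), LKAux.esingle_self] at h2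
      omega
    have hip : X.ip (esingle k) b.1 = 1 := by
      rw [hb, LKAux.ip_add_right, hkl, hss, X.diag]; norm_num
    have hht : ADE.htZ b.1 = 2 := by
      rw [hb, LKAux.htZ_add, LKAux.htZ_esingle, LKAux.htZ_esingle]; norm_num
    rw [TAn_of_ne X k b hne, if_pos hip, hht]
    have e5 : (T 1 : LaurentPolynomial ℤ) ^ 5 = T 5 := by rw [T_pow]; norm_num
    have e3 : (T 1 : LaurentPolynomial ℤ) ^ 3 = T 3 := by rw [T_pow]; norm_num
    have e23 : (T 3 : LaurentPolynomial ℤ) * T 2 = T 5 := by rw [← T_add]; norm_num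
    rw [e5, e3, show (2 : ℤ) + 1 = 3 by norm_num, mul_sub, mul_one, e23]
  · -- relation 4
    intro k l b c hl hkl hb
    have hkl' : k ≠ l := by
      intro h; rw [h, hss, X.diag] at hkl; omega
    have hbne : b.1 ≠ esingle k := by
      intro h
      have h2 := congrFun hb l
      rw [h] at h2
      simp only [Pi.add_apply] at h2
      rw [LKAux.esingle_ne (Ne.symm hkl'), LKAux.esingle_self] at h2
      have := c.2.2.1 l
      omega
    have hipkc : X.ip (esingle k) c.1 = X.ip (esingle k) b.1 := by
      rw [hb, LKAux.ip_add_right, hkl]; ring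
    have hbk : b.1 k = c.1 k := by
      have h2 := congrFun hb k
      simp only [Pi.add_apply] at h2
      rw [LKAux.esingle_ne hkl'] at h2
      omega
    have hcne : c.1 ≠ esingle k := by
      intro h
      have h2 : X.ip (esingle k) b.1 = 2 := by
        rw [← hipkc, h, hss, X.diag]
      exact hbne (LKAux.eq_single_of_ip_eq_two X b.2 h2)
    have hht : ADE.htZ b.1 = ADE.htZ c.1 + 1 := by
      rw [hb, LKAux.htZ_add, LKAux.htZ_esingle]
    rw [TAn_of_ne X k b hbne, TAn_of_ne X k c hcne, hipkc]
    by_cases h1 : X.ip (esingle k) b.1 = 1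
    · rw [if_pos h1, if_pos h1, hht, T_shift]
      ring
    · rw [if_neg h1, if_neg h1]
      by_cases h2 : X.ip (esingle k) b.1 = 0 ∧ b.1 k ≠ 0
      · have h2' : X.ip (esingle k) b.1 = 0 ∧ c.1 k ≠ 0 :=
          ⟨h2.1, by rw [← hbk]; exact h2.2⟩
        rw [if_pos h2, if_pos h2', hht, T_shift]
        ring
      · have h2' : ¬ (X.ip (esingle k) b.1 = 0 ∧ c.1 k ≠ 0) := by
          intro hh; exact h2 ⟨hh.1, by rw [hbk]; exact hh.2⟩
        rw [if_neg h2, if_neg h2']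
        ring
  · -- relation 5
    intro k l b c d h0 h1 hklm hb hd
    have hkl' : k ≠ l := hkne k l hklm
    have hClk : X.ip (esingle l) (esingle k) = -1 := by
      rw [hss, X.symm, ← hss]; exact hklm
    have hbl : b.1 l = 1 := LKAux.coord_eq_one X hC b.2 h1
    have hbk_pos : b.1 k ≠ 0 := by
      have h2 := congrFun hb k
      simp only [Pi.add_apply] at h2
      rw [LKAux.esingle_self, LKAux.esingle_ne hkl'] at h2
      have := c.2.2.1 k
      omega
    have hbne : b.1 ≠ esingle k := by
      intro h
      rw [h, LKAux.esingle_ne (Ne.symm hkl')] at hbl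
      exact absurd hbl (by norm_num)
    have hnot1 : ¬ X.ip (esingle k) b.1 = 1 := by rw [h0]; norm_num
    rw [TAn_of_ne X k b hbne, if_neg hnot1, if_pos ⟨h0, hbk_pos⟩]
    have hiplc : X.ip (esingle l) c.1 = 0 := by
      have h2 : X.ip (esingle l) b.1 = X.ip (esingle l) c.1 +
          X.ip (esingle l) (esingle k) + X.ip (esingle l) (esingle l) := by
        rw [hb, LKAux.ip_add_right, LKAux.ip_add_right]
      rw [h1, hClk, hss, X.diag] at h2
      omega
    have hcl : c.1 l = 0 := by
      have h2 := congrFun hb l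
      simp only [Pi.add_apply] at h2
      rw [LKAux.esingle_ne (Ne.symm hkl'), LKAux.esingle_self, hbl] at h2
      omega
    have hcne : c.1 ≠ esingle l := by
      intro h; rw [h, LKAux.esingle_self] at hcl; exact absurd hcl (by norm_num)
    have hTlc : TAn X l c = 0 := by
      rw [TAn_of_ne X l c hcne, if_neg (by rw [hiplc]; norm_num), if_neg]
      rintro ⟨-, h2⟩
      exact h2 hcl
    have hipkd : X.ip (esingle k) d.1 = 1 := by
      have h2 : X.ip (esingle k) b.1 = X.ip (esingle k) d.1 +
          X.ip (esingle k) (esingle l) := by rw [hd, LKAux.ip_add_right]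
      rw [h0, hklm] at h2
      omega
    have hdne : d.1 ≠ esingle k := by
      intro h; rw [h, hss, X.diag] at hipkd; omega
    have hhtd : ADE.htZ b.1 = ADE.htZ d.1 + 1 := by
      rw [hd, LKAux.htZ_add, LKAux.htZ_esingle]
    rw [hTlc, TAn_of_ne X k d hdne, if_pos hipkd, zero_add, hhtd]
    set h := ADE.htZ d.1 + 1 with hh
    have e1 : (T (h + 1) : LaurentPolynomial ℤ) = T 1 * T h := T_shift
    have e2 : (T (1 : ℤ) : LaurentPolynomial ℤ) * T (-2) = T (-1) := by
      rw [← T_add]; norm_num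
    rw [e1]
    linear_combination (-(T h * ((T 2 : LaurentPolynomial ℤ) - 1))) * e2
  · -- relation 6
    intro k l b c d hm1 h1 hklm hc hd
    have hkl' : k ≠ l := hkne k l hklm
    have hcd : d.1 = c.1 := (add_right_cancel (hc.symm.trans hd)).symm
    have hbk : b.1 k = 0 := LKAux.coord_eq_zero X hC b.2 hm1
    have hbne : b.1 ≠ esingle k := by
      intro h; rw [h, hss, X.diag] at hm1; omega
    have hTkb : TAn X k b = 0 := by
      rw [TAn_of_ne X k b hbne, if_neg (by rw [hm1]; norm_num), if_neg]
      rintro ⟨h2, -⟩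
      rw [hm1] at h2
      exact absurd h2 (by norm_num)
    have hiplc : X.ip (esingle l) c.1 = -1 := by
      have h2 : X.ip (esingle l) b.1 = X.ip (esingle l) c.1 +
          X.ip (esingle l) (esingle l) := by rw [hc, LKAux.ip_add_right]
      rw [h1, hss, X.diag] at h2
      omega
    have hcnel : c.1 ≠ esingle l := by
      intro h; rw [h, hss, X.diag] at hiplc; omega
    have hTlc : TAn X l c = 0 := by
      rw [TAn_of_ne X l c hcnel, if_neg (by rw [hiplc]; norm_num), if_neg]
      rintro ⟨h2, -⟩
      rw [hiplc] at h2
      exact absurd h2 (by norm_num)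
    have hipkc : X.ip (esingle k) c.1 = 0 := by
      have h2 : X.ip (esingle k) b.1 = X.ip (esingle k) c.1 +
          X.ip (esingle k) (esingle l) := by rw [hc, LKAux.ip_add_right]
      rw [hm1, hklm] at h2
      omega
    have hck : c.1 k = 0 := by
      have h2 := congrFun hc k
      simp only [Pi.add_apply] at h2
      rw [LKAux.esingle_ne hkl'] at h2
      omega
    have hcnek : c.1 ≠ esingle k := by
      intro h; rw [h, LKAux.esingle_self] at hck; exact absurd hck (by norm_num)
    have hTkd : TAn X k d = 0 := by
      rw [TAn_of_ne X k d (by rw [hcd]; exact hcnek), if_neg, if_neg]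
      · rintro ⟨-, h2⟩
        rw [hcd] at h2
        exact h2 hck
      · rw [hcd, hipkc]; norm_num
    rw [hTkb, hTlc, hTkd]
    ring
  · -- relation 7
    intro k l b c h1k h0l hklm hb
    have hkl' : k ≠ l := hkne k l hklm
    have hClk : X.ip (esingle l) (esingle k) = -1 := by
      rw [hss, X.symm, ← hss]; exact hklm
    have hbne : b.1 ≠ esingle k := by
      intro h; rw [h, hss, X.diag] at h1k; omega
    have hiplc : X.ip (esingle l) c.1 = 1 := by
      have h2 : X.ip (esingle l) b.1 = X.ip (esingle l) c.1 +
          X.ip (esingle l) (esingle k) := by rw [hb, LKAux.ip_add_right]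
      rw [h0l, hClk] at h2
      omega
    have hcne : c.1 ≠ esingle l := by
      intro h; rw [h, hss, X.diag] at hiplc; omega
    have hht : ADE.htZ b.1 = ADE.htZ c.1 + 1 := by
      rw [hb, LKAux.htZ_add, LKAux.htZ_esingle]
    rw [TAn_of_ne X k b hbne, if_pos h1k, TAn_of_ne X l c hcne, if_pos hiplc, hht, T_shift]
    ring
end
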